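/- arXiv:1904.01263 — 6 statements merged into one kernel-verified Lean document; each statement's English description precedes it below -/
import Mathlib

section
/- For the Erdős–Rényi random graph G(n,p) with q = 1-p, the probability p_n that G(n,p) is connected satisfies the recursion p_n = 1 - Σ_{k=1}^{n-1} C(n-1, k) q^{k(n-k)} p_{n-k} for all n ≥ 1, with p_1 = 1. -/
open Classical Finset

noncomputable section

/-- Probability that `G(n,p)` equals a given graph `g`. -/
def graphProb {n : ℕ} (p : ℝ) (g : SimpleGraph (Fin n)) : ℝ :=
  p ^ g.edgeSet.ncard * (1 - p) ^ (n.choose 2 - g.edgeSet.ncard)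

/-- Probability that `G(n,p)` satisfies the predicate `P`. -/
def probEvent (n : ℕ) (p : ℝ) (P : SimpleGraph (Fin n) → Prop) : ℝ :=
  ∑ g : SimpleGraph (Fin n), if P g then graphProb p g else 0

/-- Number of connected components. -/
def numComp {n : ℕ} (g : SimpleGraph (Fin n)) : ℕ := Nat.card g.ConnectedComponent

/-- Probability that `G(n,p)` is connected. -/
def connProb (n : ℕ) (p : ℝ) : ℝ := probEvent n p (fun g => g.Connected)

/-- `E[(ν_n - 1)^{\underline s}]`. -/
def Efall (n : ℕ) (p : ℝ) (s : ℕ) : ℝ :=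
  ∑ g : SimpleGraph (Fin n), ((numComp g - 1).descFactorial s : ℝ) * graphProb p g

/-- `E[(ν_n)^{\underline s}]`. -/
def EfallNu (n : ℕ) (p : ℝ) (s : ℕ) : ℝ :=
  ∑ g : SimpleGraph (Fin n), ((numComp g).descFactorial s : ℝ) * graphProb p g

/-- Probability that `G(n,p)` has an isolated vertex. -/
def isolProb (n : ℕ) (p : ℝ) : ℝ :=
  probEvent n p (fun g => ∃ v, ∀ w, ¬ g.Adj v w)

open SimpleGraph

lemma graphProb_eq {n : ℕ} (p : ℝ) (g : SimpleGraph (Fin n)) :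
    graphProb p g = p ^ g.edgeFinset.card * (1 - p) ^ (n.choose 2 - g.edgeFinset.card) := by
  rw [graphProb, SimpleGraph.edgeFinset, Set.ncard_eq_toFinset_card']

lemma card_top_edgeFinset (n : ℕ) :
    (⊤ : SimpleGraph (Fin n)).edgeFinset.card = n.choose 2 := by
  rw [SimpleGraph.card_edgeFinset_top_eq_card_choose_two, Fintype.card_fin]

lemma sum_graphProb (n : ℕ) (p : ℝ) : ∑ g : SimpleGraph (Fin n), graphProb p g = 1 := by
  classical
  have h := Finset.prod_add (fun _ : Sym2 (Fin n) => p) (fun _ => 1 - p)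
      ((⊤ : SimpleGraph (Fin n)).edgeFinset)
  simp only [Finset.prod_const, add_sub_cancel, one_pow] at h
  rw [h]
  refine Finset.sum_nbij' (fun g => g.edgeFinset) (fun s => SimpleGraph.fromEdgeSet ↑s)
    ?_ ?_ ?_ ?_ ?_
  · intro g _
    simp only [Finset.mem_powerset, SimpleGraph.edgeFinset_subset_edgeFinset]; exact le_top
  · intro s _; simp
  · intro g _
    simp [SimpleGraph.fromEdgeSet_edgeSet]
  · intro s hs
    rw [Finset.mem_powerset] at hs
    ext e
    simp only [SimpleGraph.mem_edgeFinset, SimpleGraph.edgeSet_fromEdgeSet, Set.mem_diff,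
      Finset.mem_coe, Set.mem_setOf_eq]
    constructor
    · tauto
    · intro he
      refine ⟨he, ?_⟩
      have := hs he
      rw [SimpleGraph.mem_edgeFinset] at this
      exact fun hd => (SimpleGraph.not_isDiag_of_mem_edgeSet _ this) hd
  · intro g _
    rw [graphProb_eq, Finset.card_sdiff_of_subset (by simp only [SimpleGraph.edgeFinset_subset_edgeFinset]; exact le_top),
      card_top_edgeFinset]

open SimpleGraph

section SumLemmas
variable {α β : Type*} {G : SimpleGraph α} {H : SimpleGraph β}

lemma sum_edgeSet (G : SimpleGraph α) (H : SimpleGraph β) :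
    (G ⊕g H).edgeSet = Sym2.map Sum.inl '' G.edgeSet ∪ Sym2.map Sum.inr '' H.edgeSet := by
  ext e
  induction e using Sym2.ind with
  | _ x y =>
    cases x <;> cases y <;>
      simp only [SimpleGraph.mem_edgeSet, SimpleGraph.sum_adj, Set.mem_union, Set.mem_image,
        Sym2.exists, Sym2.map_pair_eq, Sym2.eq_iff, Sum.inl.injEq, Sum.inr.injEq,
        reduceCtorEq, and_false, false_and, or_false, false_or, exists_false,
        or_self, exists_and_left, exists_eq_left] <;>
      constructor <;> intro h <;>
      first
      | (rcases h with ⟨a, b, hab, (⟨rfl, rfl⟩ | ⟨rfl, rfl⟩)⟩; exact hab; exact hab.symm)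
      | exact Or.inl ⟨_, _, h, Or.inl ⟨rfl, rfl⟩⟩
      | exact ⟨_, _, h, Or.inl ⟨rfl, rfl⟩⟩
      | exact Or.inr ⟨_, _, h, Or.inl ⟨rfl, rfl⟩⟩
      | exact h.elim
      | (rcases h with ⟨a, b, hab, (⟨rfl, rfl⟩|⟨rfl,rfl⟩)⟩ | ⟨a, b, hab, (⟨rfl,rfl⟩|⟨rfl,rfl⟩)⟩)
      | skip

lemma sum_edgeSet_ncard [Fintype α] [Fintype β] (G : SimpleGraph α) (H : SimpleGraph β) :
    (G ⊕g H).edgeSet.ncard = G.edgeSet.ncard + H.edgeSet.ncard := by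
  rw [sum_edgeSet, Set.ncard_union_eq _ (Set.toFinite _) (Set.toFinite _),
    Set.ncard_image_of_injective _ (Sym2.map.injective Sum.inl_injective),
    Set.ncard_image_of_injective _ (Sym2.map.injective Sum.inr_injective)]
  rw [Set.disjoint_left]
  rintro e ⟨e1, -, rfl⟩ ⟨e2, -, h⟩
  induction e1 using Sym2.ind with
  | _ x y =>
    induction e2 using Sym2.ind with
    | _ a b =>
      rw [Sym2.map_pair_eq, Sym2.map_pair_eq, Sym2.eq_iff] at h
      rcases h with ⟨h, -⟩ | ⟨h, -⟩ <;> simp at h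

lemma sum_walk_inl : ∀ {x y : α ⊕ β} (_ : (G ⊕g H).Walk x y) (u : α), x = Sum.inl u →
    ∃ v, y = Sum.inl v ∧ G.Reachable u v := by
  intro x y w
  induction w with
  | nil => exact fun u hu => ⟨u, hu, Reachable.refl u⟩
  | @cons a b c hadj p ih =>
    rintro u rfl
    match b, hadj with
    | Sum.inl b', hadj' =>
      obtain ⟨v, rfl, hr⟩ := ih b' rfl
      exact ⟨v, rfl, Reachable.trans ⟨SimpleGraph.Walk.cons hadj' SimpleGraph.Walk.nil⟩ hr⟩

lemma sum_reachable_inl {u v : α} :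
    (G ⊕g H).Reachable (Sum.inl u) (Sum.inl v) ↔ G.Reachable u v := by
  constructor
  · rintro ⟨w⟩
    obtain ⟨v', hv, hr⟩ := sum_walk_inl w u rfl
    cases Sum.inl.injEq v v' ▸ hv
    exact hr
  · intro h
    exact h.map (Embedding.sumInl (H := H)).toHom

lemma sum_not_reachable_inl_inr {u : α} {w : β} :
    ¬ (G ⊕g H).Reachable (Sum.inl u) (Sum.inr w) := by
  rintro ⟨p⟩
  obtain ⟨v, hv, -⟩ := sum_walk_inl p u rfl
  simp at hv

lemma reach_set_sum_iff (u0 : α) :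
    {y : α ⊕ β | (G ⊕g H).Reachable (Sum.inl u0) y} = Set.range Sum.inl ↔ G.Connected := by
  constructor
  · intro h
    have : Nonempty α := ⟨u0⟩
    refine ⟨fun u v => ?_⟩
    have hu : (G ⊕g H).Reachable (Sum.inl u0) (Sum.inl u) :=
      (Set.ext_iff.mp h (Sum.inl u)).mpr ⟨u, rfl⟩
    have hv : (G ⊕g H).Reachable (Sum.inl u0) (Sum.inl v) :=
      (Set.ext_iff.mp h (Sum.inl v)).mpr ⟨v, rfl⟩
    exact (sum_reachable_inl.mp hu).symm.trans (sum_reachable_inl.mp hv)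
  · intro hc
    ext y
    simp only [Set.mem_setOf_eq, Set.mem_range]
    constructor
    · intro h
      cases y with
      | inl v => exact ⟨v, rfl⟩
      | inr w => exact absurd h sum_not_reachable_inl_inr
    · rintro ⟨v, rfl⟩
      exact sum_reachable_inl.mpr (hc.preconnected u0 v)

end SumLemmas
variable {n : ℕ}

/-- Equivalence `Fin m ⊕ Fin k ≃ Fin n` built from `S` with `S.card = m`, `k = n - m`. -/
def splitEquiv (S : Finset (Fin n)) {m k : ℕ} (hm : S.card = m) (hk : Sᶜ.card = k) :
    Fin m ⊕ Fin k ≃ Fin n :=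
  (Equiv.sumCongr (S.orderIsoOfFin hm).toEquiv (Sᶜ.orderIsoOfFin hk).toEquiv).trans
    ((Equiv.sumCongr (Equiv.refl _) (Equiv.subtypeEquivRight (fun x => by simp))).trans
      (Equiv.Set.sumCompl (↑S : Set (Fin n))))

lemma splitEquiv_inl (S : Finset (Fin n)) {m k : ℕ} (hm : S.card = m) (hk : Sᶜ.card = k)
    (u : Fin m) : splitEquiv S hm hk (Sum.inl u) = ↑(S.orderIsoOfFin hm u) := by
  simp only [splitEquiv, Equiv.trans_apply, Equiv.sumCongr_apply, Sum.map_inl, Equiv.refl_apply]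
  exact Equiv.Set.sumCompl_apply_inl _ _

lemma splitEquiv_inr (S : Finset (Fin n)) {m k : ℕ} (hm : S.card = m) (hk : Sᶜ.card = k)
    (w : Fin k) : splitEquiv S hm hk (Sum.inr w) = ↑(Sᶜ.orderIsoOfFin hk w) := by
  simp only [splitEquiv, Equiv.trans_apply, Equiv.sumCongr_apply, Sum.map_inr]
  exact Equiv.Set.sumCompl_apply_inr _ _

lemma splitEquiv_inl_mem (S : Finset (Fin n)) {m k : ℕ} (hm : S.card = m) (hk : Sᶜ.card = k)
    (u : Fin m) : splitEquiv S hm hk (Sum.inl u) ∈ S := by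
  rw [splitEquiv_inl]; exact (S.orderIsoOfFin hm u).2

lemma splitEquiv_inr_not_mem (S : Finset (Fin n)) {m k : ℕ} (hm : S.card = m) (hk : Sᶜ.card = k)
    (w : Fin k) : splitEquiv S hm hk (Sum.inr w) ∉ S := by
  rw [splitEquiv_inr]; exact Finset.mem_compl.mp (Sᶜ.orderIsoOfFin hk w).2

lemma splitEquiv_image (S : Finset (Fin n)) {m k : ℕ} (hm : S.card = m) (hk : Sᶜ.card = k) :
    (splitEquiv S hm hk) '' (Set.range Sum.inl) = ↑S := by
  apply Set.eq_of_subset_of_subset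
  · rintro x ⟨y, ⟨u, rfl⟩, rfl⟩
    exact splitEquiv_inl_mem S hm hk u
  · intro x hx
    obtain ⟨y, hy⟩ := (splitEquiv S hm hk).surjective x
    cases y with
    | inl u => exact ⟨Sum.inl u, ⟨u, rfl⟩, hy⟩
    | inr w => exact absurd (hy ▸ splitEquiv_inr_not_mem S hm hk w) (by simpa using hx)

lemma choose_two_add (m k : ℕ) : (m + k).choose 2 = m.choose 2 + m * k + k.choose 2 := by
  induction k with
  | zero => simp
  | succ k ih =>
    have h1 : m + (k + 1) = (m + k) + 1 := by ring
    rw [h1, Nat.choose_succ_succ, Nat.choose_succ_succ]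
    simp only [Nat.choose_one_right]
    show (m + k) + (m + k).choose 2 = m.choose 2 + m * (k+1) + (k + k.choose 2)
    rw [ih]; ring

lemma edge_ncard_le {m : ℕ} (g : SimpleGraph (Fin m)) : g.edgeSet.ncard ≤ m.choose 2 := by
  classical
  have h1 : g.edgeSet.ncard = g.edgeFinset.card := by
    rw [SimpleGraph.edgeFinset, Set.ncard_eq_toFinset_card']
  rw [h1]
  have := SimpleGraph.card_edgeFinset_le_card_choose_two (G := g)
  rwa [Fintype.card_fin] at this

lemma key (p : ℝ) {n m k : ℕ} (S : Finset (Fin n)) (v0 : Fin n) (hv0 : v0 ∈ S)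
    (hm : S.card = m) (hk : Sᶜ.card = k) :
    ∑ g : SimpleGraph (Fin n), (if {x | g.Reachable v0 x} = ↑S then graphProb p g else 0)
      = (1 - p) ^ (m * k) * connProb m p := by
  classical
  have hnk : m + k = n := by
    rw [← hm, ← hk]
    rw [Finset.card_compl, Fintype.card_fin]
    have := Finset.card_le_univ S
    rw [Fintype.card_fin] at this
    omega
  set φ := splitEquiv S hm hk with hφ
  set Φ : SimpleGraph (Fin m) × SimpleGraph (Fin k) → SimpleGraph (Fin n) :=
    fun gg => (gg.1 ⊕g gg.2).map φ.toEmbedding with hΦ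
  have hadj : ∀ gg (a b : Fin n),
      (Φ gg).Adj a b ↔ (gg.1 ⊕g gg.2).Adj (φ.symm a) (φ.symm b) := by
    intro gg a b
    rw [hΦ]
    dsimp only
    rw [← SimpleGraph.comap_symm]
    rfl
  set u0 : Fin m := (S.orderIsoOfFin hm).symm ⟨v0, hv0⟩ with hu0
  have hφu0 : φ (Sum.inl u0) = v0 := by
    rw [hφ, splitEquiv_inl, hu0, OrderIso.apply_symm_apply]
  -- reach set characterization
  have hreach : ∀ gg, ({x | (Φ gg).Reachable v0 x} = ↑S ↔ gg.1.Connected) := by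
    intro gg
    set ψ := SimpleGraph.Iso.map φ (gg.1 ⊕g gg.2) with hψ
    have hset : {x | (Φ gg).Reachable v0 x}
        = φ '' {y | (gg.1 ⊕g gg.2).Reachable (Sum.inl u0) y} := by
      ext x
      simp only [Set.mem_setOf_eq, Set.mem_image]
      constructor
      · intro h
        refine ⟨φ.symm x, ?_, φ.apply_symm_apply x⟩
        have : (Φ gg).Reachable (ψ (Sum.inl u0)) (ψ (φ.symm x)) := by
          have h1 : ψ (Sum.inl u0) = v0 := hφu0
          have h2 : ψ (φ.symm x) = x := φ.apply_symm_apply x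
          rw [h1, h2]
          exact h
        exact Iso.reachable_iff.mp this
      · rintro ⟨y, hy, rfl⟩
        have : (Φ gg).Reachable (ψ (Sum.inl u0)) (ψ y) := Iso.reachable_iff.mpr hy
        have h1 : ψ (Sum.inl u0) = v0 := hφu0
        rwa [h1] at this
    rw [hset, ← splitEquiv_image S hm hk, ← hφ,
      Set.image_eq_image φ.injective]
    exact reach_set_sum_iff u0
  -- edge count
  have hcard : ∀ gg, (Φ gg).edgeSet.ncard = gg.1.edgeSet.ncard + gg.2.edgeSet.ncard := by
    intro gg
    rw [← sum_edgeSet_ncard]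
    rw [← Nat.card_coe_set_eq, ← Nat.card_coe_set_eq]
    exact (Nat.card_congr ((SimpleGraph.Iso.map φ (gg.1 ⊕g gg.2)).mapEdgeSet)).symm
  -- graphProb value
  have hval : ∀ gg : SimpleGraph (Fin m) × SimpleGraph (Fin k),
      graphProb p (Φ gg) = (1 - p) ^ (m * k) * (graphProb p gg.1 * graphProb p gg.2) := by
    intro gg
    rw [graphProb, hcard gg]
    have e1 := edge_ncard_le gg.1
    have e2 := edge_ncard_le gg.2
    have hch : n.choose 2 = m.choose 2 + m * k + k.choose 2 := by
      rw [← hnk, choose_two_add]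
    have hsub : n.choose 2 - (gg.1.edgeSet.ncard + gg.2.edgeSet.ncard)
        = (m.choose 2 - gg.1.edgeSet.ncard) + m * k + (k.choose 2 - gg.2.edgeSet.ncard) := by
      omega
    rw [hsub, pow_add, pow_add, pow_add, graphProb, graphProb]
    ring
  -- right inverse fact
  have hright : ∀ g : SimpleGraph (Fin n), {x | g.Reachable v0 x} = ↑S →
      Φ (g.comap (fun u => φ (Sum.inl u)), g.comap (fun w => φ (Sum.inr w))) = g := by
    intro g hg
    have hN : ∀ a b : Fin n, a ∈ S → b ∉ S → ¬ g.Adj a b := by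
      intro a b haS hbS hab
      have h1 : g.Reachable v0 a := (Set.ext_iff.mp hg a).mpr haS
      have h2 : g.Reachable v0 b := h1.trans hab.reachable
      exact hbS ((Set.ext_iff.mp hg b).mp h2)
    ext a b
    rw [hadj]
    have ha := φ.apply_symm_apply a
    have hb := φ.apply_symm_apply b
    rcases hsa : φ.symm a with xa | xa <;> rcases hsb : φ.symm b with xb | xb <;>
      rw [hsa] at ha <;> rw [hsb] at hb
    · simp only [SimpleGraph.sum_adj, SimpleGraph.comap_adj]
      rw [ha, hb]
    · simp only [SimpleGraph.sum_adj]
      constructor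
      · exact False.elim
      · intro hab
        exact absurd hab
          (hN a b (ha ▸ splitEquiv_inl_mem S hm hk xa) (hb ▸ splitEquiv_inr_not_mem S hm hk xb))
    · simp only [SimpleGraph.sum_adj]
      constructor
      · exact False.elim
      · intro hab
        exact absurd hab.symm
          (hN b a (hb ▸ splitEquiv_inl_mem S hm hk xb) (ha ▸ splitEquiv_inr_not_mem S hm hk xa))
    · simp only [SimpleGraph.sum_adj, SimpleGraph.comap_adj]
      rw [ha, hb]
  -- the bijection
  rw [← Finset.sum_filter]
  have hbij : ∑ gg ∈ Finset.univ.filter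
        (fun gg : SimpleGraph (Fin m) × SimpleGraph (Fin k) => gg.1.Connected),
        graphProb p (Φ gg)
      = ∑ g ∈ Finset.univ.filter
        (fun g : SimpleGraph (Fin n) => {x | g.Reachable v0 x} = ↑S), graphProb p g := by
    refine Finset.sum_nbij' Φ
      (fun g => (g.comap (fun u => φ (Sum.inl u)), g.comap (fun w => φ (Sum.inr w))))
      ?_ ?_ ?_ ?_ ?_
    · intro gg hgg
      rw [Finset.mem_filter] at hgg ⊢
      exact ⟨Finset.mem_univ _, (hreach gg).mpr hgg.2⟩
    · intro g hg
      rw [Finset.mem_filter] at hg ⊢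
      refine ⟨Finset.mem_univ _, ?_⟩
      apply (hreach _).mp
      rw [hright g hg.2]
      exact hg.2
    · -- left inverse : j (Φ gg) = gg
      intro gg _
      have e1 : (Φ gg).comap (fun u => φ (Sum.inl u)) = gg.1 := by
        ext u v
        rw [SimpleGraph.comap_adj, hadj, φ.symm_apply_apply, φ.symm_apply_apply]
        simp [SimpleGraph.sum_adj]
      have e2 : (Φ gg).comap (fun w => φ (Sum.inr w)) = gg.2 := by
        ext u v
        rw [SimpleGraph.comap_adj, hadj, φ.symm_apply_apply, φ.symm_apply_apply]
        simp [SimpleGraph.sum_adj]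
      exact Prod.ext e1 e2
    · -- right inverse : Φ (j g) = g
      intro g hg
      rw [Finset.mem_filter] at hg
      exact hright g hg.2
    · intro gg _
      rfl
  rw [← hbij]
  have hfilter : Finset.univ.filter
      (fun gg : SimpleGraph (Fin m) × SimpleGraph (Fin k) => gg.1.Connected)
      = (Finset.univ.filter (fun g : SimpleGraph (Fin m) => g.Connected)) ×ˢ Finset.univ := by
    ext gg
    simp [Finset.mem_product]
  rw [hfilter]
  calc ∑ gg ∈ (Finset.univ.filter (fun g : SimpleGraph (Fin m) => g.Connected)) ×ˢ Finset.univ,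
        graphProb p (Φ gg)
      = ∑ g1 ∈ Finset.univ.filter (fun g : SimpleGraph (Fin m) => g.Connected),
          ∑ g2 : SimpleGraph (Fin k),
            (1 - p) ^ (m * k) * (graphProb p g1 * graphProb p g2) := by
        rw [Finset.sum_product]
        exact Finset.sum_congr rfl (fun g1 _ => Finset.sum_congr rfl (fun g2 _ => hval (g1, g2)))
    _ = (1 - p) ^ (m * k) * connProb m p := by
        have h2 : ∀ g1 : SimpleGraph (Fin m),
            ∑ g2 : SimpleGraph (Fin k), (1 - p) ^ (m * k) * (graphProb p g1 * graphProb p g2)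
            = (1 - p) ^ (m * k) * graphProb p g1 := by
          intro g1
          rw [← Finset.mul_sum, ← Finset.mul_sum, sum_graphProb, mul_one]
        rw [Finset.sum_congr rfl (fun g1 _ => h2 g1), ← Finset.mul_sum]
        congr 1
        rw [connProb, probEvent, Finset.sum_filter]
        exact Finset.sum_congr rfl fun g _ => by by_cases h : g.Connected <;> simp [h]

lemma card_filter_erase (n : ℕ) (v0 : Fin n) : ((Finset.univ : Finset (Fin n)).erase v0).card = n - 1 := by
  rw [Finset.card_erase_of_mem (Finset.mem_univ v0), Finset.card_univ, Fintype.card_fin]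

lemma count_sets (n m : ℕ) (v0 : Fin n) (hm : 1 ≤ m) :
    ((Finset.univ.filter (fun S : Finset (Fin n) => v0 ∈ S ∧ S.card = m)).card)
      = (n - 1).choose (m - 1) := by
  classical
  rw [← card_filter_erase n v0, ← Finset.card_powersetCard (m - 1) (Finset.univ.erase v0)]
  apply Finset.card_nbij' (fun S => S.erase v0) (fun T => insert v0 T)
  · intro S hS
    rw [Finset.mem_coe, Finset.mem_filter] at hS
    rw [Finset.mem_coe, Finset.mem_powersetCard]
    exact ⟨Finset.erase_subset_erase v0 (Finset.subset_univ S),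
      by rw [Finset.card_erase_of_mem hS.2.1, hS.2.2]⟩
  · intro T hT
    rw [Finset.mem_coe, Finset.mem_powersetCard] at hT
    have hv0T : v0 ∉ T := fun h => (Finset.mem_erase.mp (hT.1 h)).1 rfl
    rw [Finset.mem_coe, Finset.mem_filter]
    refine ⟨Finset.mem_univ _, Finset.mem_insert_self _ _, ?_⟩
    rw [Finset.card_insert_of_notMem hv0T, hT.2]
    omega
  · intro S hS
    rw [Finset.mem_coe, Finset.mem_filter] at hS
    exact Finset.insert_erase hS.2.1
  · intro T hT
    rw [Finset.mem_coe, Finset.mem_powersetCard] at hT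
    exact Finset.erase_insert (fun h => (Finset.mem_erase.mp (hT.1 h)).1 rfl)

lemma partition_identity (n : ℕ) (p : ℝ) (v0 : Fin n) :
    1 = ∑ m ∈ Finset.Icc 1 n,
      ((n - 1).choose (m - 1) : ℝ) * (1 - p) ^ (m * (n - m)) * connProb m p := by
  classical
  have hmaps : ∀ g : SimpleGraph (Fin n), g ∈ (Finset.univ : Finset (SimpleGraph (Fin n))) →
      {x | g.Reachable v0 x}.toFinset ∈ Finset.univ.filter (fun S : Finset (Fin n) => v0 ∈ S) := by
    intro g _
    rw [Finset.mem_filter]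
    refine ⟨Finset.mem_univ _, ?_⟩
    rw [Set.mem_toFinset]
    exact Reachable.refl v0
  have h1 : ∑ S ∈ Finset.univ.filter (fun S : Finset (Fin n) => v0 ∈ S),
      (1 - p) ^ (S.card * (n - S.card)) * connProb S.card p
      = ∑ g : SimpleGraph (Fin n), graphProb p g := by
    rw [← Finset.sum_fiberwise_of_maps_to hmaps (fun g => graphProb p g)]
    refine Finset.sum_congr rfl (fun S hS => ?_)
    rw [Finset.mem_filter] at hS
    have hkey := key p S v0 hS.2 rfl (by rw [Finset.card_compl, Fintype.card_fin])
    rw [← hkey, Finset.sum_filter]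
    refine Finset.sum_congr rfl (fun g _ => ?_)
    congr 1
    apply propext
    constructor
    · intro h
      rw [← Finset.coe_inj, Set.coe_toFinset, h]
    · intro h
      rw [← h]
      simp [Set.coe_toFinset]
  have hmaps2 : ∀ S ∈ Finset.univ.filter (fun S : Finset (Fin n) => v0 ∈ S),
      S.card ∈ Finset.Icc 1 n := by
    intro S hS
    rw [Finset.mem_filter] at hS
    rw [Finset.mem_Icc]
    constructor
    · exact Finset.card_pos.mpr ⟨v0, hS.2⟩
    · have := Finset.card_le_univ S
      rwa [Fintype.card_fin] at this
  calc (1 : ℝ) = ∑ g : SimpleGraph (Fin n), graphProb p g := (sum_graphProb n p).symm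
    _ = ∑ S ∈ Finset.univ.filter (fun S : Finset (Fin n) => v0 ∈ S),
        (1 - p) ^ (S.card * (n - S.card)) * connProb S.card p := h1.symm
    _ = ∑ m ∈ Finset.Icc 1 n, ∑ S ∈ (Finset.univ.filter
          (fun S : Finset (Fin n) => v0 ∈ S)).filter (fun S => S.card = m),
        (1 - p) ^ (S.card * (n - S.card)) * connProb S.card p :=
      (Finset.sum_fiberwise_of_maps_to hmaps2 _).symm
    _ = ∑ m ∈ Finset.Icc 1 n,
        ((n - 1).choose (m - 1) : ℝ) * (1 - p) ^ (m * (n - m)) * connProb m p := by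
      refine Finset.sum_congr rfl (fun m hm => ?_)
      rw [Finset.mem_Icc] at hm
      have hterm : ∀ S ∈ (Finset.univ.filter (fun S : Finset (Fin n) => v0 ∈ S)).filter
          (fun S => S.card = m),
          (1 - p) ^ (S.card * (n - S.card)) * connProb S.card p
            = (1 - p) ^ (m * (n - m)) * connProb m p := by
        intro S hS
        rw [Finset.mem_filter] at hS
        rw [hS.2]
      rw [Finset.sum_congr rfl hterm, Finset.sum_const, nsmul_eq_mul]
      rw [Finset.filter_filter]
      rw [count_sets n m v0 hm.1]
      ring

theorem connProb_recursion (p : ℝ) (hp0 : 0 ≤ p) (hp1 : p ≤ 1) (n : ℕ) (hn : 1 ≤ n) :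
    connProb n p =
      1 - ∑ k ∈ Finset.Icc 1 (n - 1),
        (n - 1).choose k * (1 - p) ^ (k * (n - k)) * connProb (n - k) p ∧
    connProb 1 p = 1 := by
  constructor
  · have hpi := partition_identity n p ⟨0, hn⟩
    have hicc : Finset.Icc 1 n = insert n (Finset.Icc 1 (n - 1)) := by
      ext a
      simp only [Finset.mem_Icc, Finset.mem_insert]
      omega
    have hnot : n ∉ Finset.Icc 1 (n - 1) := by
      simp only [Finset.mem_Icc]
      omega
    rw [hicc, Finset.sum_insert hnot] at hpi
    rw [Nat.choose_self, Nat.sub_self, Nat.mul_zero, pow_zero, Nat.cast_one, one_mul, one_mul]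
      at hpi
    have hsum : ∑ m ∈ Finset.Icc 1 (n - 1),
        ((n - 1).choose (m - 1) : ℝ) * (1 - p) ^ (m * (n - m)) * connProb m p
        = ∑ k ∈ Finset.Icc 1 (n - 1),
          ((n - 1).choose k : ℝ) * (1 - p) ^ (k * (n - k)) * connProb (n - k) p := by
      refine Finset.sum_nbij' (fun m => n - m) (fun k => n - k) ?_ ?_ ?_ ?_ ?_
      · intro m hm
        rw [Finset.mem_Icc] at hm
        show n - m ∈ Finset.Icc 1 (n - 1)
        rw [Finset.mem_Icc]
        omega
      · intro k hk
        rw [Finset.mem_Icc] at hk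
        show n - k ∈ Finset.Icc 1 (n - 1)
        rw [Finset.mem_Icc]
        omega
      · intro m hm
        rw [Finset.mem_Icc] at hm
        show n - (n - m) = m
        omega
      · intro k hk
        rw [Finset.mem_Icc] at hk
        show n - (n - k) = k
        omega
      · intro m hm
        rw [Finset.mem_Icc] at hm
        have h1 : n - (n - m) = m := by omega
        have h2 : (n - 1).choose (n - m) = (n - 1).choose (m - 1) := by
          have h3 : (n - 1) - (m - 1) = n - m := by omega
          rw [← h3, Nat.choose_symm (by omega)]
        rw [h1, h2, mul_comm m (n - m)]
    rw [hsum] at hpi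
    linarith
  · rw [connProb, probEvent]
    have hconn : ∀ g : SimpleGraph (Fin 1), g.Connected := by
      intro g
      have : Nonempty (Fin 1) := ⟨0⟩
      refine ⟨fun u v => ?_⟩
      rw [Subsingleton.elim u v]
    exact (Finset.sum_congr rfl (fun g _ => if_pos (hconn g))).trans (sum_graphProb 1 p)
end
end

section
/- For the Erdős–Rényi random graph, n = Σ_{k=0}^{n} C(n,k) q^{k(n-k)} k p_k for all n ≥ 0, where p_k is the probability that G(k,p) is connected and q = 1-p. -/
open Classical Finset
set_option linter.unusedSectionVars false

noncomputable section

namespace ERG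
variable {V : Type*} [Fintype V] [DecidableEq V]

def w (p : ℝ) (G : SimpleGraph V) (e : {e : Sym2 V // ¬ e.IsDiag}) : ℝ :=
  if e.1 ∈ G.edgeSet then p else 1 - p

def gP (p : ℝ) (G : SimpleGraph V) : ℝ := ∏ e : {e : Sym2 V // ¬ e.IsDiag}, w p G e

lemma card_filter_mem (G : SimpleGraph V) :
    (univ.filter (fun e : {e : Sym2 V // ¬ e.IsDiag} => e.1 ∈ G.edgeSet)).card
      = G.edgeSet.ncard := by
  rw [← Fintype.card_subtype]
  have e : {e : {e : Sym2 V // ¬ e.IsDiag} // e.1 ∈ G.edgeSet} ≃ G.edgeSet :=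
    { toFun := fun x => ⟨x.1.1, x.2⟩
      invFun := fun x => ⟨⟨x.1, G.not_isDiag_of_mem_edgeSet x.2⟩, x.2⟩
      left_inv := fun x => rfl
      right_inv := fun x => rfl }
  rw [Fintype.card_congr e, ← Nat.card_coe_set_eq, Nat.card_eq_fintype_card]

lemma gP_eq (p : ℝ) (G : SimpleGraph V) :
    gP p G = p ^ G.edgeSet.ncard
      * (1 - p) ^ ((Fintype.card V).choose 2 - G.edgeSet.ncard) := by
  classical
  rw [gP, ← Finset.prod_filter_mul_prod_filter_not univ (fun e => e.1 ∈ G.edgeSet)]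
  have h1 : ∀ e ∈ univ.filter (fun e : {e : Sym2 V // ¬ e.IsDiag} => e.1 ∈ G.edgeSet),
      w p G e = p := by
    intro e he; simp only [mem_filter] at he; simp [w, he.2]
  have h2 : ∀ e ∈ univ.filter (fun e : {e : Sym2 V // ¬ e.IsDiag} => ¬ e.1 ∈ G.edgeSet),
      w p G e = 1 - p := by
    intro e he; simp only [mem_filter] at he; simp [w, he.2]
  rw [Finset.prod_congr rfl h1, Finset.prod_congr rfl h2, Finset.prod_const,
    Finset.prod_const, card_filter_mem]
  congr 2
  have h3 := Finset.card_filter_add_card_filter_not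
    (s := (univ : Finset {e : Sym2 V // ¬ e.IsDiag}))
    (p := fun e => e.1 ∈ G.edgeSet)
  have hcard : (univ : Finset {e : Sym2 V // ¬ e.IsDiag}).card = (Fintype.card V).choose 2 := by
    rw [Finset.card_univ, Sym2.card_subtype_not_diag]
  have h4 := card_filter_mem G
  omega

def graphEquiv : SimpleGraph V ≃ ({e : Sym2 V // ¬ e.IsDiag} → Bool) where
  toFun G e := decide (e.1 ∈ G.edgeSet)
  invFun f := SimpleGraph.fromEdgeSet {x | ∃ h : ¬ x.IsDiag, f ⟨x, h⟩ = true}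
  left_inv G := by
    rw [← SimpleGraph.edgeSet_inj, SimpleGraph.edgeSet_fromEdgeSet]
    ext x
    simp only [Set.mem_diff, Set.mem_setOf_eq, decide_eq_true_eq]
    constructor
    · rintro ⟨⟨h, hx⟩, _⟩; exact hx
    · intro hx; exact ⟨⟨G.not_isDiag_of_mem_edgeSet hx, hx⟩, G.not_isDiag_of_mem_edgeSet hx⟩
  right_inv f := by
    funext e
    have : e.1 ∈ (SimpleGraph.fromEdgeSet {x | ∃ h : ¬ x.IsDiag, f ⟨x, h⟩ = true}).edgeSet
        ↔ f e = true := by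
      rw [SimpleGraph.edgeSet_fromEdgeSet]
      simp only [Set.mem_diff, Set.mem_setOf_eq]
      constructor
      · rintro ⟨⟨h, hx⟩, _⟩; convert hx
      · intro hx; exact ⟨⟨e.2, hx⟩, e.2⟩
    simp [this, e.2]

lemma mem_edgeSet_graphEquiv_symm (f : {e : Sym2 V // ¬ e.IsDiag} → Bool)
    (e : {e : Sym2 V // ¬ e.IsDiag}) :
    e.1 ∈ ((graphEquiv (V := V)).symm f).edgeSet ↔ f e = true := by
  show e.1 ∈ (SimpleGraph.fromEdgeSet {x | ∃ h : ¬ x.IsDiag, f ⟨x, h⟩ = true}).edgeSet ↔ _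
  rw [SimpleGraph.edgeSet_fromEdgeSet]
  simp only [Set.mem_diff, Set.mem_setOf_eq]
  constructor
  · rintro ⟨⟨h, hx⟩, _⟩; convert hx
  · intro hx; exact ⟨⟨e.2, hx⟩, e.2⟩

lemma sum_gP (p : ℝ) : ∑ G : SimpleGraph V, gP p G = 1 := by
  rw [← Equiv.sum_comp (graphEquiv (V := V)).symm (fun G => gP p G)]
  have key : ∀ f : {e : Sym2 V // ¬ e.IsDiag} → Bool,
      gP p ((graphEquiv (V := V)).symm f) = ∏ e, (fun (e : {e : Sym2 V // ¬ e.IsDiag})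
        (b : Bool) => if b then p else 1 - p) e (f e) := by
    intro f
    refine Finset.prod_congr rfl fun e _ => ?_
    rw [w]
    simp only [mem_edgeSet_graphEquiv_symm]
  rw [Finset.sum_congr rfl (fun f _ => key f)]
  have hps := Finset.prod_univ_sum (fun _ : {e : Sym2 V // ¬ e.IsDiag} => (univ : Finset Bool))
    (fun e b => if b then p else 1 - p)
  rw [Fintype.piFinset_univ] at hps
  rw [← hps]
  simp

section Decomp
variable (S : Finset V)

def combine (g₁ : SimpleGraph {x : V // x ∈ S}) (g₂ : SimpleGraph {x : V // x ∉ S})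
    (f : {x : V // x ∈ S} × {x : V // x ∉ S} → Bool) : SimpleGraph V where
  Adj x y := (∃ hx hy, g₁.Adj ⟨x, hx⟩ ⟨y, hy⟩) ∨ (∃ hx hy, g₂.Adj ⟨x, hx⟩ ⟨y, hy⟩)
    ∨ (∃ (hx : x ∈ S) (hy : y ∉ S), f (⟨x, hx⟩, ⟨y, hy⟩) = true)
    ∨ (∃ (hx : x ∉ S) (hy : y ∈ S), f (⟨y, hy⟩, ⟨x, hx⟩) = true)
  symm := by
    constructor
    rintro x y (⟨hx, hy, h⟩ | ⟨hx, hy, h⟩ | ⟨hx, hy, h⟩ | ⟨hx, hy, h⟩)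
    · exact Or.inl ⟨hy, hx, h.symm⟩
    · exact Or.inr (Or.inl ⟨hy, hx, h.symm⟩)
    · exact Or.inr (Or.inr (Or.inr ⟨hy, hx, h⟩))
    · exact Or.inr (Or.inr (Or.inl ⟨hy, hx, h⟩))
  loopless := by
    constructor
    rintro x (⟨hx, hy, h⟩ | ⟨hx, hy, h⟩ | ⟨hx, hy, h⟩ | ⟨hx, hy, h⟩)
    · exact g₁.loopless.irrefl _ h
    · exact g₂.loopless.irrefl _ h
    · exact hy hx
    · exact hx hy

variable {S}
variable {g₁ : SimpleGraph {x : V // x ∈ S}} {g₂ : SimpleGraph {x : V // x ∉ S}}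
  {f : {x : V // x ∈ S} × {x : V // x ∉ S} → Bool}

lemma combine_adj_SS {x y : V} (hx : x ∈ S) (hy : y ∈ S) :
    (combine S g₁ g₂ f).Adj x y ↔ g₁.Adj ⟨x, hx⟩ ⟨y, hy⟩ := by
  constructor
  · rintro (⟨hx', hy', h⟩ | ⟨hx', hy', h⟩ | ⟨hx', hy', h⟩ | ⟨hx', hy', h⟩)
    · exact h
    · exact absurd hx hx'
    · exact absurd hy hy'
    · exact absurd hx hx'
  · intro h; exact Or.inl ⟨hx, hy, h⟩

lemma combine_adj_BB {x y : V} (hx : x ∉ S) (hy : y ∉ S) :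
    (combine S g₁ g₂ f).Adj x y ↔ g₂.Adj ⟨x, hx⟩ ⟨y, hy⟩ := by
  constructor
  · rintro (⟨hx', hy', h⟩ | ⟨hx', hy', h⟩ | ⟨hx', hy', h⟩ | ⟨hx', hy', h⟩)
    · exact absurd hx' hx
    · exact h
    · exact absurd hx' hx
    · exact absurd hy' hy
  · intro h; exact Or.inr (Or.inl ⟨hx, hy, h⟩)

lemma combine_adj_SB {x y : V} (hx : x ∈ S) (hy : y ∉ S) :
    (combine S g₁ g₂ f).Adj x y ↔ f (⟨x, hx⟩, ⟨y, hy⟩) = true := by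
  constructor
  · rintro (⟨hx', hy', h⟩ | ⟨hx', hy', h⟩ | ⟨hx', hy', h⟩ | ⟨hx', hy', h⟩)
    · exact absurd hy' hy
    · exact absurd hx hx'
    · exact h
    · exact absurd hx hx'
  · intro h; exact Or.inr (Or.inr (Or.inl ⟨hx, hy, h⟩))

variable (S)

def graphDecomp : SimpleGraph V ≃
    SimpleGraph {x : V // x ∈ S} × SimpleGraph {x : V // x ∉ S}
      × ({x : V // x ∈ S} × {x : V // x ∉ S} → Bool) where
  toFun G := (G.comap Subtype.val, G.comap Subtype.val,
    fun ab => decide (G.Adj ab.1.1 ab.2.1))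
  invFun t := combine S t.1 t.2.1 t.2.2
  left_inv G := by
    ext x y
    by_cases hx : x ∈ S <;> by_cases hy : y ∈ S
    · rw [combine_adj_SS hx hy]; rfl
    · rw [combine_adj_SB hx hy]; simp
    · rw [(combine S _ _ _).adj_comm, combine_adj_SB hy hx]
      simp [SimpleGraph.adj_comm]
    · rw [combine_adj_BB hx hy]; rfl
  right_inv t := by
    obtain ⟨g₁, g₂, f⟩ := t
    refine Prod.ext ?_ (Prod.ext ?_ ?_)
    · ext a b
      simpa using combine_adj_SS a.2 b.2 (g₁ := g₁) (g₂ := g₂) (f := f)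
    · ext a b
      simpa using combine_adj_BB a.2 b.2 (g₁ := g₁) (g₂ := g₂) (f := f)
    · funext ab
      have h := combine_adj_SB (g₁ := g₁) (g₂ := g₂) (f := f) ab.1.2 ab.2.2
      simp [h]

end Decomp

section Split
variable (S : Finset V)

lemma gP_irrel {α : Type*} {i1 i2 : Fintype α} {d1 d2 : DecidableEq α} (p : ℝ)
    (G : SimpleGraph α) : @gP α i1 d1 p G = @gP α i2 d2 p G := by
  obtain rfl : i1 = i2 := Subsingleton.elim _ _
  obtain rfl : d1 = d2 := Subsingleton.elim _ _
  rfl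

lemma map_subtype_not_isDiag {P : V → Prop} (e : Sym2 {x // P x}) (h : ¬ e.IsDiag) :
    ¬ (Sym2.map (Subtype.val) e).IsDiag := by
  revert h
  induction e using Sym2.ind with | _ a b =>
  rw [Sym2.map_pair_eq, Sym2.mk_isDiag_iff, Sym2.mk_isDiag_iff]
  exact fun h hh => h (Subtype.ext hh)

lemma prod_ES_subtype (p : ℝ) (G : SimpleGraph V) (P : V → Prop)
    (t : Finset {e : Sym2 V // ¬ e.IsDiag}) (ht : ∀ e, e ∈ t ↔ ∀ x ∈ e.1, P x) :
    gP p (G.comap (Subtype.val : {x // P x} → V)) = ∏ e ∈ t, w p G e := by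
  rw [gP]
  refine Finset.prod_bij
    (fun e' _ => ⟨Sym2.map Subtype.val e'.1, map_subtype_not_isDiag e'.1 e'.2⟩)
    ?_ ?_ ?_ ?_
  · intro e' _
    rw [ht]
    intro x hx
    rw [Sym2.mem_map] at hx
    obtain ⟨a, _, rfl⟩ := hx
    exact a.2
  · intro a _ b _ hab
    have := congrArg Subtype.val hab
    simp only at this
    exact Subtype.ext (Sym2.map.injective Subtype.val_injective this)
  · rintro ⟨e, he⟩ hb
    rw [ht] at hb
    have hb' : ∀ x ∈ e, P x := hb
    clear hb
    revert he
    induction e using Sym2.ind with | _ x y =>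
    intro he
    have hx : P x := hb' x (Sym2.mem_mk_left x y)
    have hy : P y := hb' y (Sym2.mem_mk_right x y)
    have hne : ¬ (s((⟨x, hx⟩ : {x // P x}), ⟨y, hy⟩)).IsDiag := by
      rw [Sym2.mk_isDiag_iff] at he ⊢
      exact fun hh => he (congrArg Subtype.val hh)
    refine ⟨⟨s(⟨x, hx⟩, ⟨y, hy⟩), hne⟩, mem_univ _, ?_⟩
    apply Subtype.ext
    simp [Sym2.map_pair_eq]
  · rintro ⟨e, he⟩ _
    revert he
    induction e using Sym2.ind with | _ a b =>
    intro he
    simp [w, Sym2.map_pair_eq, SimpleGraph.mem_edgeSet]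

lemma prod_cross (p : ℝ) (G : SimpleGraph V) :
    ∏ ab : {x : V // x ∈ S} × {x : V // x ∉ S}, (if G.Adj ab.1.1 ab.2.1 then p else 1 - p)
      = ∏ e ∈ (univ.filter
            (fun e : {e : Sym2 V // ¬ e.IsDiag} => ¬ ∀ x ∈ e.1, x ∈ S)).filter
            (fun e => ¬ ∀ x ∈ e.1, x ∉ S),
          w p G e := by
  refine Finset.prod_bij
    (fun ab _ => ⟨s(ab.1.1, ab.2.1), by
      rw [Sym2.mk_isDiag_iff]
      intro hh
      exact ab.2.2 (hh ▸ ab.1.2)⟩) ?_ ?_ ?_ ?_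
  · intro ab _
    simp only [mem_filter, mem_univ, true_and]
    constructor
    · intro hall
      exact ab.2.2 (hall ab.2.1 (Sym2.mem_mk_right _ _))
    · intro hall
      exact (hall ab.1.1 (Sym2.mem_mk_left _ _)) ab.1.2
  · rintro ⟨a, b⟩ _ ⟨c, d⟩ _ hab
    have := congrArg Subtype.val hab
    simp only [Sym2.eq_iff] at this
    rcases this with ⟨h1, h2⟩ | ⟨h1, h2⟩
    · exact Prod.ext (Subtype.ext h1) (Subtype.ext h2)
    · exact absurd (h1 ▸ a.2) d.2
  · rintro ⟨e, he⟩ hb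
    simp only [mem_filter, mem_univ, true_and, not_forall] at hb
    obtain ⟨⟨u, hu, huS⟩, ⟨v, hv, hvS⟩⟩ := hb
    revert he
    induction e using Sym2.ind with | _ x y =>
    intro he
    rw [Sym2.mem_iff] at hu hv
    by_cases hx : x ∈ S
    · have hy : y ∉ S := by
        rcases hu with rfl | rfl
        · exact absurd hx huS
        · exact huS
      exact ⟨(⟨x, hx⟩, ⟨y, hy⟩), mem_univ _, rfl⟩
    · have hy : y ∈ S := by
        rcases hv with rfl | rfl
        · exact absurd hx hvS
        · exact not_not.mp hvS
      refine ⟨(⟨y, hy⟩, ⟨x, hx⟩), mem_univ _, Subtype.ext ?_⟩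
      exact Sym2.eq_swap
  · intro ab _
    simp [w, SimpleGraph.mem_edgeSet]

lemma gP_split (p : ℝ) (G : SimpleGraph V) :
    gP p G = gP p (G.comap (Subtype.val : {x : V // x ∈ S} → V))
      * gP p (G.comap (Subtype.val : {x : V // x ∉ S} → V))
      * ∏ ab : {x : V // x ∈ S} × {x : V // x ∉ S},
          (if G.Adj ab.1.1 ab.2.1 then p else 1 - p) := by
  rw [gP, ← Finset.prod_filter_mul_prod_filter_not univ
    (fun e : {e : Sym2 V // ¬ e.IsDiag} => ∀ x ∈ e.1, x ∈ S),
    ← Finset.prod_filter_mul_prod_filter_not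
      (univ.filter (fun e : {e : Sym2 V // ¬ e.IsDiag} => ¬ ∀ x ∈ e.1, x ∈ S))
      (fun e => ∀ x ∈ e.1, x ∉ S)]
  have hff : (univ.filter (fun e : {e : Sym2 V // ¬ e.IsDiag} => ¬ ∀ x ∈ e.1, x ∈ S)).filter
        (fun e => ∀ x ∈ e.1, x ∉ S)
      = univ.filter (fun e : {e : Sym2 V // ¬ e.IsDiag} => ∀ x ∈ e.1, x ∉ S) := by
    ext e
    simp only [mem_filter, mem_univ, true_and]
    constructor
    · rintro ⟨h1, h2⟩; exact h2
    · intro h2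
      refine ⟨fun hall => ?_, h2⟩
      exact h2 e.1.out.1 (Sym2.out_fst_mem e.1) (hall e.1.out.1 (Sym2.out_fst_mem e.1))
  rw [hff, ← prod_cross S p G]
  have h1 := prod_ES_subtype p G (fun x => x ∈ S)
    (univ.filter (fun e : {e : Sym2 V // ¬ e.IsDiag} => ∀ x ∈ e.1, x ∈ S))
    (fun e => by simp)
  have h2 := prod_ES_subtype p G (fun x => x ∉ S)
    (univ.filter (fun e : {e : Sym2 V // ¬ e.IsDiag} => ∀ x ∈ e.1, x ∉ S))
    (fun e => by simp)
  rw [← h1, ← h2, ← mul_assoc]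
  congr 1
  congr 1
  · exact gP_irrel p _
  · exact gP_irrel p _

end Split

def isComp (G : SimpleGraph V) (S : Finset V) : Prop :=
  ∃ v ∈ S, ∀ w, (w ∈ S ↔ G.Reachable v w)

def homOfComap (G : SimpleGraph V) (S : Finset V) :
    (G.comap (Subtype.val : {x : V // x ∈ S} → V)) →g G where
  toFun := Subtype.val
  map_rel' := fun h => h

lemma walk_stay {G : SimpleGraph V} {S : Finset V}
    (hcross : ∀ x y, x ∈ S → y ∉ S → ¬ G.Adj x y) :
    ∀ {x y : V}, G.Walk x y → x ∈ S → y ∈ S ∧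
      ∀ (hx : x ∈ S) (hy : y ∈ S),
        (G.comap (Subtype.val : {v : V // v ∈ S} → V)).Reachable ⟨x, hx⟩ ⟨y, hy⟩ := by
  intro x y wxy
  induction wxy with
  | nil => exact fun hx => ⟨hx, fun _ _ => SimpleGraph.Reachable.refl _⟩
  | @cons a b c h q ih =>
      intro hx
      have hb : b ∈ S := by
        by_contra hb
        exact hcross a b hx hb h
      obtain ⟨hy, hr⟩ := ih hb
      refine ⟨hy, fun hx' hy' => ?_⟩
      have hadj : (G.comap (Subtype.val : {v : V // v ∈ S} → V)).Adj ⟨a, hx'⟩ ⟨b, hb⟩ := h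
      exact hadj.reachable.trans (hr hb hy')

lemma isComp_iff (G : SimpleGraph V) (S : Finset V) :
    isComp G S ↔ (G.comap (Subtype.val : {x : V // x ∈ S} → V)).Connected
      ∧ ∀ (a : {x : V // x ∈ S}) (b : {x : V // x ∉ S}), ¬ G.Adj a.1 b.1 := by
  constructor
  · rintro ⟨v, hv, hS⟩
    have hcross : ∀ x y, x ∈ S → y ∉ S → ¬ G.Adj x y := by
      intro x y hx hy hadj
      exact hy ((hS y).mpr (((hS x).mp hx).trans hadj.reachable))
    constructor
    · rw [SimpleGraph.connected_iff]
      refine ⟨fun a b => ?_, ⟨⟨v, hv⟩⟩⟩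
      have r : G.Reachable a.1 b.1 := ((hS a.1).mp a.2).symm.trans ((hS b.1).mp b.2)
      obtain ⟨wk⟩ := r
      exact (walk_stay hcross wk a.2).2 a.2 b.2
    · exact fun a b => hcross a.1 b.1 a.2 b.2
  · rintro ⟨hconn, hcrossAB⟩
    have hcross : ∀ x y, x ∈ S → y ∉ S → ¬ G.Adj x y :=
      fun x y hx hy => hcrossAB ⟨x, hx⟩ ⟨y, hy⟩
    obtain ⟨⟨v, hv⟩⟩ := hconn.nonempty
    refine ⟨v, hv, fun u => ⟨fun hu => ?_, fun hr => ?_⟩⟩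
    · exact (hconn.preconnected ⟨v, hv⟩ ⟨u, hu⟩).map (homOfComap G S)
    · obtain ⟨wk⟩ := hr
      exact (walk_stay hcross wk hv).1

lemma sum_isComp_card (G : SimpleGraph V) :
    ∑ S : Finset V, (if isComp G S then (S.card : ℝ) else 0) = Fintype.card V := by
  have step : ∀ S : Finset V, (if isComp G S then (S.card : ℝ) else 0)
      = ∑ v : V, (if isComp G S ∧ v ∈ S then (1 : ℝ) else 0) := by
    intro S
    by_cases h : isComp G S
    · simp only [h, true_and, if_true]
      rw [Finset.sum_ite_mem, Finset.univ_inter, Finset.sum_const, nsmul_eq_mul, mul_one]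
    · simp [h]
  rw [Finset.sum_congr rfl (fun S _ => step S), Finset.sum_comm]
  have hv : ∀ v : V, ∑ S : Finset V, (if isComp G S ∧ v ∈ S then (1 : ℝ) else 0) = 1 := by
    intro v
    have huniq : ∀ S : Finset V, (isComp G S ∧ v ∈ S) ↔ S = univ.filter (G.Reachable v) := by
      intro S
      constructor
      · rintro ⟨⟨u, hu, hS⟩, hvS⟩
        have hru : G.Reachable u v := (hS v).mp hvS
        ext w
        simp only [mem_filter, mem_univ, true_and]
        rw [hS w]
        exact ⟨fun h => hru.symm.trans h, fun h => hru.trans h⟩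
      · rintro rfl
        have hvv : G.Reachable v v := SimpleGraph.Reachable.refl v
        exact ⟨⟨v, by simp [hvv], fun w => by simp⟩, by simp [hvv]⟩
    rw [Finset.sum_congr rfl (fun S _ => if_congr (huniq S) rfl rfl)]
    simp
  rw [Finset.sum_congr rfl (fun v _ => hv v)]
  simp

def sumConn (p : ℝ) (α : Type*) [Fintype α] [DecidableEq α] : ℝ :=
  ∑ G : SimpleGraph α, if G.Connected then gP p G else 0

lemma sumConn_congr (p : ℝ) {α β : Type*} [Fintype α] [DecidableEq α] [Fintype β]
    [DecidableEq β] (e : α ≃ β) : sumConn p α = sumConn p β := by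
  rw [sumConn, sumConn, ← Equiv.sum_comp e.simpleGraph
    (fun G : SimpleGraph β => if G.Connected then gP p G else 0)]
  refine Finset.sum_congr rfl fun G _ => ?_
  have iso : G ≃g (e.simpleGraph G) := (SimpleGraph.Iso.comap e.symm G).symm
  have hconn : (e.simpleGraph G).Connected ↔ G.Connected := iso.symm.connected_iff
  have hcard : (e.simpleGraph G).edgeSet.ncard = G.edgeSet.ncard := by
    rw [← Nat.card_coe_set_eq, ← Nat.card_coe_set_eq]
    exact Nat.card_congr iso.mapEdgeSet.symm
  have hgp : gP p (e.simpleGraph G) = gP p G := by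
    rw [gP_eq, gP_eq, hcard, Fintype.card_congr e.symm]
  rw [if_congr hconn hgp rfl]

lemma sum_isComp_gP (p : ℝ) (S : Finset V) :
    ∑ G : SimpleGraph V, (if isComp G S then gP p G else 0)
      = sumConn p {x : V // x ∈ S} * (1 - p) ^ (S.card * (Fintype.card V - S.card)) := by
  rw [← Equiv.sum_comp (graphDecomp S).symm
    (fun G => if isComp G S then gP p G else 0)]
  have hterm : ∀ t : SimpleGraph {x : V // x ∈ S} × SimpleGraph {x : V // x ∉ S}
      × ({x : V // x ∈ S} × {x : V // x ∉ S} → Bool),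
      (if isComp ((graphDecomp S).symm t) S then gP p ((graphDecomp S).symm t) else 0)
      = (if t.1.Connected then gP p t.1 else 0) * (gP p t.2.1
          * (if (∀ ab, t.2.2 ab = false) then
              ∏ _ab : {x : V // x ∈ S} × {x : V // x ∉ S}, (1 - p) else 0)) := by
    rintro ⟨g₁, g₂, f⟩
    have hcomap1 : ((graphDecomp S).symm (g₁, g₂, f)).comap
        (Subtype.val : {x : V // x ∈ S} → V) = g₁ :=
      congrArg (fun t => t.1) ((graphDecomp S).right_inv (g₁, g₂, f))
    have hcomap2 : ((graphDecomp S).symm (g₁, g₂, f)).comap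
        (Subtype.val : {x : V // x ∉ S} → V) = g₂ :=
      congrArg (fun t => t.2.1) ((graphDecomp S).right_inv (g₁, g₂, f))
    have hadj : ∀ ab : {x : V // x ∈ S} × {x : V // x ∉ S},
        ((graphDecomp S).symm (g₁, g₂, f)).Adj ab.1.1 ab.2.1 ↔ f ab = true := by
      rintro ⟨a, b⟩
      exact combine_adj_SB a.2 b.2
    have hcond : isComp ((graphDecomp S).symm (g₁, g₂, f)) S
        ↔ (g₁.Connected ∧ ∀ ab, f ab = false) := by
      rw [isComp_iff, hcomap1]
      constructor
      · rintro ⟨h1, h2⟩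
        refine ⟨h1, fun ab => ?_⟩
        have := h2 ab.1 ab.2
        rw [hadj ab] at this
        simpa using this
      · rintro ⟨h1, h2⟩
        refine ⟨h1, fun a b => ?_⟩
        rw [hadj (a, b), h2]
        simp
    have hgp : gP p ((graphDecomp S).symm (g₁, g₂, f))
        = gP p g₁ * gP p g₂ * ∏ ab : {x : V // x ∈ S} × {x : V // x ∉ S},
            (if f ab then p else 1 - p) := by
      rw [gP_split S p ((graphDecomp S).symm (g₁, g₂, f)), hcomap1, hcomap2]
      congr 1
      refine Finset.prod_congr rfl fun ab _ => ?_
      rw [if_congr (hadj ab) rfl rfl]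
    rw [if_congr hcond hgp rfl]
    by_cases h1 : g₁.Connected
    · by_cases h2 : ∀ ab, f ab = false
      · rw [if_pos ⟨h1, h2⟩, if_pos h1, if_pos h2]
        have hprod : (∏ ab : {x : V // x ∈ S} × {x : V // x ∉ S},
              (if f ab = true then p else 1 - p))
            = ∏ _ab : {x : V // x ∈ S} × {x : V // x ∉ S}, (1 - p) :=
          Finset.prod_congr rfl fun ab _ => by rw [h2 ab]; simp
        rw [hprod]; ring
      · rw [if_neg (fun h => h2 h.2), if_neg h2]; ring
    · rw [if_neg (fun h => h1 h.1), if_neg h1]; ring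
  have hsum2 : ∑ g₂ : SimpleGraph {x : V // x ∉ S}, gP p g₂ = 1 := sum_gP p
  have hsum3 : ∑ f : ({x : V // x ∈ S} × {x : V // x ∉ S} → Bool),
      (if (∀ ab, f ab = false) then
        ∏ _ab : {x : V // x ∈ S} × {x : V // x ∉ S}, (1 - p) else 0)
      = (1 - p) ^ (S.card * (Fintype.card V - S.card)) := by
    have hiff : ∀ f : ({x : V // x ∈ S} × {x : V // x ∉ S} → Bool),
        (∀ ab, f ab = false) ↔ f = (fun _ => false) := by
      intro f
      constructor
      · intro h; funext ab; exact h ab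
      · intro h ab; rw [h]
    rw [Finset.sum_congr rfl (fun f _ => if_congr (hiff f) rfl rfl)]
    rw [Finset.sum_ite_eq' univ (fun _ => false)
      (fun _ => ∏ _ab : {x : V // x ∈ S} × {x : V // x ∉ S}, (1 - p))]
    simp only [mem_univ, if_true]
    rw [Finset.prod_const, Finset.card_univ, Fintype.card_prod, Fintype.card_coe,
      Fintype.card_subtype_compl, Fintype.card_coe]
  rw [Finset.sum_congr rfl (fun t _ => hterm t)]
  rw [Fintype.sum_prod_type]
  dsimp only
  rw [← Finset.sum_mul_sum _ _ (fun x : SimpleGraph {x : V // x ∈ S} => if x.Connected then gP p x else 0)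
    (fun y : SimpleGraph {x : V // x ∉ S} × ({x : V // x ∈ S} × {x : V // x ∉ S} → Bool) =>
      gP p y.1 * (if (∀ ab, y.2 ab = false) then
        ∏ _ab : {x : V // x ∈ S} × {x : V // x ∉ S}, (1 - p) else 0))]
  rw [Fintype.sum_prod_type]
  dsimp only
  rw [← Finset.sum_mul_sum _ _ (fun x : SimpleGraph {x : V // x ∉ S} => gP p x)
    (fun f : ({x : V // x ∈ S} × {x : V // x ∉ S} → Bool) => (if (∀ ab, f ab = false) then
        ∏ _ab : {x : V // x ∈ S} × {x : V // x ∉ S}, (1 - p) else 0))]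
  rw [hsum2, hsum3, sumConn]
  ring

end ERG

lemma graphProb_eq_gP {n : ℕ} (p : ℝ) (g : SimpleGraph (Fin n)) :
    graphProb p g = ERG.gP p g := by
  rw [graphProb, ERG.gP_eq, Fintype.card_fin]

lemma connProb_eq_sumConn (k : ℕ) (p : ℝ) : connProb k p = ERG.sumConn p (Fin k) := by
  rw [connProb, probEvent, ERG.sumConn]
  refine Finset.sum_congr rfl fun g _ => ?_
  by_cases h : g.Connected
  · rw [if_pos h, if_pos h, graphProb_eq_gP]
  · rw [if_neg h, if_neg h]

theorem sum_choose_connProb (p : ℝ) (hp0 : 0 ≤ p) (hp1 : p ≤ 1) (n : ℕ) :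
    (n : ℝ) = ∑ k ∈ Finset.range (n + 1),
      n.choose k * (1 - p) ^ (k * (n - k)) * k * connProb k p := by
  have hS : ∀ S : Finset (Fin n),
      (∑ G : SimpleGraph (Fin n), if ERG.isComp G S then ERG.gP p G else 0)
        = (1 - p) ^ (S.card * (n - S.card)) * connProb S.card p := by
    intro S
    rw [ERG.sum_isComp_gP p S]
    have hc : Fintype.card {x : Fin n // x ∈ S} = S.card := Fintype.card_coe S
    rw [ERG.sumConn_congr p (Fintype.equivFinOfCardEq hc), ← connProb_eq_sumConn,
      Fintype.card_fin]
    ring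
  have key : ∑ S : Finset (Fin n), (S.card : ℝ) *
      (∑ G : SimpleGraph (Fin n), if ERG.isComp G S then ERG.gP p G else 0) = n := by
    simp_rw [Finset.mul_sum]
    rw [Finset.sum_comm]
    have inner : ∀ G : SimpleGraph (Fin n),
        ∑ S : Finset (Fin n), (S.card : ℝ) * (if ERG.isComp G S then ERG.gP p G else 0)
          = ERG.gP p G * n := by
      intro G
      have hpt : ∀ S : Finset (Fin n), (S.card : ℝ) * (if ERG.isComp G S then ERG.gP p G else 0)
          = ERG.gP p G * (if ERG.isComp G S then (S.card : ℝ) else 0) := by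
        intro S
        by_cases h : ERG.isComp G S <;> simp [h] <;> ring
      rw [Finset.sum_congr rfl (fun S _ => hpt S), ← Finset.mul_sum, ERG.sum_isComp_card,
        Fintype.card_fin]
    rw [Finset.sum_congr rfl (fun G _ => inner G), ← Finset.sum_mul, ERG.sum_gP, one_mul]
  calc (n : ℝ) = ∑ S : Finset (Fin n), (S.card : ℝ) *
        (∑ G : SimpleGraph (Fin n), if ERG.isComp G S then ERG.gP p G else 0) := key.symm
    _ = ∑ S : Finset (Fin n), (S.card : ℝ)
          * ((1 - p) ^ (S.card * (n - S.card)) * connProb S.card p) :=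
        Finset.sum_congr rfl fun S _ => by rw [hS S]
    _ = ∑ S ∈ (univ : Finset (Fin n)).powerset, (S.card : ℝ)
          * ((1 - p) ^ (S.card * (n - S.card)) * connProb S.card p) := by
        rw [Finset.powerset_univ]
    _ = ∑ k ∈ Finset.range (n + 1), ∑ S ∈ Finset.powersetCard k (univ : Finset (Fin n)),
          (S.card : ℝ) * ((1 - p) ^ (S.card * (n - S.card)) * connProb S.card p) := by
        rw [Finset.sum_powerset, Finset.card_univ, Fintype.card_fin]
    _ = ∑ k ∈ Finset.range (n + 1),
          n.choose k * (1 - p) ^ (k * (n - k)) * k * connProb k p := by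
        refine Finset.sum_congr rfl fun k hk => ?_
        have hterm : ∀ S ∈ Finset.powersetCard k (univ : Finset (Fin n)),
            (S.card : ℝ) * ((1 - p) ^ (S.card * (n - S.card)) * connProb S.card p)
              = (k : ℝ) * ((1 - p) ^ (k * (n - k)) * connProb k p) := by
          intro S hSk
          rw [(Finset.mem_powersetCard_univ.mp hSk : S.card = k)]
        rw [Finset.sum_congr rfl hterm, Finset.sum_const, Finset.card_powersetCard,
          Finset.card_univ, Fintype.card_fin, nsmul_eq_mul]
        push_cast
        ring
end
end

section
/- Let ν_n be the number of connected components of G(n,p). For n ≥ s > 1, P(ν_n = s) = Σ_{k=s-1}^{n-1} C(n-1, k) P(ν_k = s-1) p_{n-k} q^{k(n-k)}, where p_m is the probability that G(m,p) is connected and q = 1-p. -/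
open Classical Finset

noncomputable section

namespace NCAux

open SimpleGraph

variable {α β : Type*} {G : SimpleGraph α} {H : SimpleGraph β}

lemma sum_walk_classify : ∀ {x y : α ⊕ β}, (G ⊕g H).Walk x y →
    (∃ a b, x = Sum.inl a ∧ y = Sum.inl b ∧ G.Reachable a b) ∨
    (∃ a b, x = Sum.inr a ∧ y = Sum.inr b ∧ H.Reachable a b) := by
  intro x y w
  induction w with
  | nil =>
    rename_i u
    cases u with
    | inl a => exact Or.inl ⟨a, a, rfl, rfl, Reachable.refl a⟩
    | inr b => exact Or.inr ⟨b, b, rfl, rfl, Reachable.refl b⟩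
  | cons h w ih =>
    rename_i u v z
    cases u with
    | inl a =>
      cases v with
      | inl a' =>
        rcases ih with ⟨a'', b, hx, hy, hr⟩ | ⟨a'', b, hx, hy, hr⟩
        · obtain rfl : a' = a'' := by injection hx
          exact Or.inl ⟨a, b, rfl, hy,
            (SimpleGraph.Adj.reachable (by simpa using h)).trans hr⟩
        · simp at hx
      | inr b' => simp [SimpleGraph.sum_adj] at h
    | inr b =>
      cases v with
      | inl a' => simp [SimpleGraph.sum_adj] at h
      | inr b' =>
        rcases ih with ⟨a'', b'', hx, hy, hr⟩ | ⟨a'', b'', hx, hy, hr⟩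
        · simp at hx
        · obtain rfl : b' = a'' := by injection hx
          exact Or.inr ⟨b, b'', rfl, hy,
            (SimpleGraph.Adj.reachable (by simpa using h)).trans hr⟩

lemma reach_inr_iff {u v : β} :
    (G ⊕g H).Reachable (Sum.inr u) (Sum.inr v) ↔ H.Reachable u v := by
  constructor
  · rintro ⟨w⟩
    rcases sum_walk_classify w with ⟨a, b, hx, hy, hr⟩ | ⟨a, b, hx, hy, hr⟩
    · simp at hx
    · obtain rfl : u = a := by injection hx
      obtain rfl : v = b := by injection hy
      exact hr
  · intro h
    exact h.map (Embedding.sumInr : H ↪g G ⊕g H).toHom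

lemma not_reach_inr_inl {u : β} {a : α} :
    ¬ (G ⊕g H).Reachable (Sum.inr u) (Sum.inl a) := by
  rintro ⟨w⟩
  rcases sum_walk_classify w with ⟨a', b, hx, hy, hr⟩ | ⟨a', b, hx, hy, hr⟩
  · simp at hx
  · simp at hy

/-- Connected components of a disjoint sum. -/
def sumCCEquiv (G : SimpleGraph α) (H : SimpleGraph β) :
    (G ⊕g H).ConnectedComponent ≃ (G.ConnectedComponent ⊕ H.ConnectedComponent) where
  toFun := ConnectedComponent.lift (Sum.map G.connectedComponentMk H.connectedComponentMk)
    (by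
      intro v w p _
      rcases sum_walk_classify p with ⟨a, b, hx, hy, hr⟩ | ⟨a, b, hx, hy, hr⟩ <;>
        subst hx <;> subst hy <;>
        simp [ConnectedComponent.sound hr])
  invFun := Sum.elim (ConnectedComponent.map (Embedding.sumInl : G ↪g G ⊕g H).toHom)
    (ConnectedComponent.map (Embedding.sumInr : H ↪g G ⊕g H).toHom)
  left_inv := by
    refine ConnectedComponent.ind ?_
    rintro (a | b) <;> rfl
  right_inv := by
    rintro (c | c)
    · exact ConnectedComponent.ind (fun v => rfl) c
    · exact ConnectedComponent.ind (fun v => rfl) c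

lemma connected_iff_natCard {G : SimpleGraph α} :
    G.Connected ↔ Nat.card G.ConnectedComponent = 1 := by
  rw [Nat.card_eq_one_iff_unique]
  constructor
  · intro h
    exact ⟨h.preconnected.subsingleton_connectedComponent,
      ⟨G.connectedComponentMk h.nonempty.some⟩⟩
  · rintro ⟨hsub, ⟨c⟩⟩
    obtain ⟨v, -⟩ := c.exists_rep
    rw [connected_iff]
    refine ⟨fun u w => ?_, ⟨v⟩⟩
    exact ConnectedComponent.exact (hsub.elim _ _)

lemma edgeSet_sum (G : SimpleGraph α) (H : SimpleGraph β) :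
    (G ⊕g H).edgeSet =
      Sym2.map Sum.inl '' G.edgeSet ∪ Sym2.map Sum.inr '' H.edgeSet := by
  ext z
  refine Sym2.ind (fun x y => ?_) z
  constructor
  · intro hz
    rw [mem_edgeSet] at hz
    cases x with
    | inl a =>
      cases y with
      | inl b =>
        left
        exact ⟨s(a, b), by simpa using hz, by simp⟩
      | inr b => simp [SimpleGraph.sum_adj] at hz
    | inr a =>
      cases y with
      | inl b => simp [SimpleGraph.sum_adj] at hz
      | inr b =>
        right
        exact ⟨s(a, b), by simpa using hz, by simp⟩
  · rintro (⟨w, hw, hmap⟩ | ⟨w, hw, hmap⟩) <;>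
    · revert hw hmap
      refine Sym2.ind (fun a b hw hmap => ?_) w
      rw [← hmap]
      simp only [Sym2.map_pair_eq, mem_edgeSet, SimpleGraph.sum_adj]
      simpa using hw

lemma ncard_edgeSet_sum [Finite α] [Finite β] (G : SimpleGraph α) (H : SimpleGraph β) :
    (G ⊕g H).edgeSet.ncard = G.edgeSet.ncard + H.edgeSet.ncard := by
  have hfin1 : (Sym2.map (Sum.inl : α → α ⊕ β) '' G.edgeSet).Finite := Set.toFinite _
  have hfin2 : (Sym2.map (Sum.inr : β → α ⊕ β) '' H.edgeSet).Finite := Set.toFinite _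
  rw [edgeSet_sum, Set.ncard_union_eq ?_ hfin1 hfin2,
    Set.ncard_image_of_injective _ (Sym2.map.injective Sum.inl_injective),
    Set.ncard_image_of_injective _ (Sym2.map.injective Sum.inr_injective)]
  rw [Set.disjoint_left]
  rintro z ⟨w, -, hw⟩ ⟨w', -, hw'⟩
  revert hw hw'
  refine Sym2.ind (fun a b hw => ?_) w
  refine Sym2.ind (fun c d hw' => ?_) w'
  rw [← hw] at hw'
  simp [Sym2.map_pair_eq, Sym2.eq_iff] at hw' 

/-- The iso between `G.comap e` and `G` for an equivalence `e`. -/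
def comapIso (e : α ≃ β) (G : SimpleGraph β) : G.comap ⇑e ≃g G :=
  ⟨e, Iff.rfl⟩

lemma chooseTwoAdd (k m : ℕ) : (k + m).choose 2 = k.choose 2 + m.choose 2 + k * m := by
  induction m with
  | zero => simp
  | succ m ih =>
    have h2 : ∀ t : ℕ, (t + 1).choose 2 = t + t.choose 2 := fun t => by
      rw [Nat.choose_succ_succ t 1, Nat.choose_one_right]
    have h4 : k + (m + 1) = k + m + 1 := by ring
    rw [h4, h2, h2, ih]
    ring

lemma ncard_edgeSet_le {n : ℕ} (g : SimpleGraph (Fin n)) :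
    g.edgeSet.ncard ≤ n.choose 2 := by
  classical
  letI : Fintype g.edgeSet := Fintype.ofFinite _
  have h1 : g.edgeSet.ncard = g.edgeFinset.card := by
    rw [Set.ncard_eq_toFinset_card']
    congr 1
  rw [h1]
  simpa using g.card_edgeFinset_le_card_choose_two

lemma graphProb_comap_sum (p : ℝ) {n k m : ℕ} (e : Fin n ≃ (Fin k ⊕ Fin m))
    (g1 : SimpleGraph (Fin k)) (g2 : SimpleGraph (Fin m)) :
    graphProb p ((g1 ⊕g g2).comap ⇑e) =
      graphProb p g1 * graphProb p g2 * (1 - p) ^ (k * m) := by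
  have hn : n = k + m := by simpa using Fintype.card_congr e
  have hedge : ((g1 ⊕g g2).comap ⇑e).edgeSet.ncard =
      g1.edgeSet.ncard + g2.edgeSet.ncard := by
    have h1 : Nat.card ((g1 ⊕g g2).comap ⇑e).edgeSet = Nat.card (g1 ⊕g g2).edgeSet :=
      Nat.card_congr (Iso.mapEdgeSet (comapIso e (g1 ⊕g g2)))
    rw [Nat.card_coe_set_eq, Nat.card_coe_set_eq] at h1
    rw [h1, ncard_edgeSet_sum]
  have h1 := ncard_edgeSet_le g1
  have h2 := ncard_edgeSet_le g2
  unfold graphProb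
  rw [hedge, hn, chooseTwoAdd]
  rw [show k.choose 2 + m.choose 2 + k * m - (g1.edgeSet.ncard + g2.edgeSet.ncard)
      = (k.choose 2 - g1.edgeSet.ncard) + (m.choose 2 - g2.edgeSet.ncard) + k * m
    from by omega]
  rw [pow_add, pow_add, pow_add]
  ring

lemma numComp_comap_sum {n k m : ℕ} (e : Fin n ≃ (Fin k ⊕ Fin m))
    (g1 : SimpleGraph (Fin k)) (g2 : SimpleGraph (Fin m)) :
    numComp ((g1 ⊕g g2).comap ⇑e) = numComp g1 + numComp g2 := by
  unfold numComp
  rw [Nat.card_congr (comapIso e (g1 ⊕g g2)).connectedComponentEquiv,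
    Nat.card_congr (sumCCEquiv g1 g2), Nat.card_sum]


/-- The gluing map. -/
def phi {n k m : ℕ} (e : Fin n ≃ (Fin k ⊕ Fin m))
    (gp : SimpleGraph (Fin k) × SimpleGraph (Fin m)) : SimpleGraph (Fin n) :=
  (gp.1 ⊕g gp.2).comap ⇑e

lemma phi_adj {n k m : ℕ} (e : Fin n ≃ (Fin k ⊕ Fin m))
    (gp : SimpleGraph (Fin k) × SimpleGraph (Fin m)) (x y : Fin n) :
    (phi e gp).Adj x y ↔ (gp.1 ⊕g gp.2).Adj (e x) (e y) := Iff.rfl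

lemma phi_inj {n k m : ℕ} (e : Fin n ≃ (Fin k ⊕ Fin m)) :
    Function.Injective (phi e) := by
  intro a b hab
  have key2 : ∀ u v : Fin k ⊕ Fin m, (a.1 ⊕g a.2).Adj u v ↔ (b.1 ⊕g b.2).Adj u v := by
    intro u v
    have h := congrArg (fun G : SimpleGraph (Fin n) => G.Adj (e.symm u) (e.symm v)) hab
    simp only [phi, SimpleGraph.comap_adj, Equiv.apply_symm_apply] at h
    exact iff_of_eq h
  obtain ⟨a1, a2⟩ := a
  obtain ⟨b1, b2⟩ := b
  have h1 : a1 = b1 := by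
    ext u v
    simpa using key2 (Sum.inl u) (Sum.inl v)
  have h2 : a2 = b2 := by
    ext u v
    simpa using key2 (Sum.inr u) (Sum.inr v)
  simp [h1, h2]

lemma phi_reach {n k m : ℕ} (e : Fin n ≃ (Fin k ⊕ Fin m))
    (gp : SimpleGraph (Fin k) × SimpleGraph (Fin m)) (x y : Fin n) :
    (phi e gp).Reachable x y ↔ (gp.1 ⊕g gp.2).Reachable (e x) (e y) :=
  (Iso.reachable_iff (φ := comapIso e (gp.1 ⊕g gp.2)) (u := x) (v := y)).symm

lemma key (p : ℝ) (s n k m : ℕ)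
    (e : Fin n ≃ (Fin k ⊕ Fin m)) (v0 : Fin n) (v0' : Fin m)
    (hv0 : e v0 = Sum.inr v0')
    (S : Finset (Fin n)) (hS : ∀ x, x ∈ S ↔ (e x).isLeft) :
    (∑ g : SimpleGraph (Fin n),
        if numComp g = s + 1 ∧ Finset.univ.filter (fun x => ¬ g.Reachable v0 x) = S
        then graphProb p g else 0)
      = probEvent k p (fun g => numComp g = s) *
          probEvent m p (fun g => g.Connected) * (1 - p) ^ (k * m) := by
  classical
  have hmem : ∀ g : SimpleGraph (Fin n),
      (Finset.univ.filter (fun x => ¬ g.Reachable v0 x) = S) →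
      g ∈ Finset.image (phi e) Finset.univ := by
    intro g hcond
    have hreach : ∀ x : Fin n, x ∉ S → g.Reachable v0 x := by
      intro x hx
      by_contra hr
      exact hx (hcond ▸ Finset.mem_filter.mpr ⟨Finset.mem_univ x, hr⟩)
    have hunreach : ∀ x : Fin n, x ∈ S → ¬ g.Reachable v0 x := by
      intro x hx
      rw [← hcond] at hx
      exact (Finset.mem_filter.mp hx).2
    refine Finset.mem_image.mpr
      ⟨(g.comap (fun a => e.symm (Sum.inl a)), g.comap (fun b => e.symm (Sum.inr b))),
        Finset.mem_univ _, ?_⟩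
    ext x y
    rw [phi_adj]
    rcases hx : e x with a | b <;> rcases hy : e y with a' | b'
    · simp only [SimpleGraph.sum_adj, SimpleGraph.comap_adj]
      rw [← hx, ← hy, e.symm_apply_apply, e.symm_apply_apply]
    · have hxS : x ∈ S := (hS x).mpr (by rw [hx]; rfl)
      have hyS : y ∉ S := by rw [hS y, hy]; simp
      constructor
      · intro h; simp at h
      · intro h
        exact absurd ((hreach y hyS).trans (SimpleGraph.Adj.reachable h.symm))
          (hunreach x hxS)
    · have hxS : x ∉ S := by rw [hS x, hx]; simp
      have hyS : y ∈ S := (hS y).mpr (by rw [hy]; rfl)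
      constructor
      · intro h; simp at h
      · intro h
        exact absurd ((hreach x hxS).trans (SimpleGraph.Adj.reachable h))
          (hunreach y hyS)
    · simp only [SimpleGraph.sum_adj, SimpleGraph.comap_adj]
      rw [← hx, ← hy, e.symm_apply_apply, e.symm_apply_apply]
  have hzero : ∀ g ∈ (Finset.univ : Finset (SimpleGraph (Fin n))),
      g ∉ Finset.image (phi e) Finset.univ →
      (if numComp g = s + 1 ∧ Finset.univ.filter (fun x => ¬ g.Reachable v0 x) = S
       then graphProb p g else 0) = 0 := by
    intro g _ hg
    rw [if_neg]
    rintro ⟨-, hc⟩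
    exact hg (hmem g hc)
  rw [← Finset.sum_subset (Finset.subset_univ _) hzero,
    Finset.sum_image (fun a _ b _ h => phi_inj e h)]
  have hterm : ∀ gp : SimpleGraph (Fin k) × SimpleGraph (Fin m),
      (if numComp (phi e gp) = s + 1 ∧
          Finset.univ.filter (fun x => ¬ (phi e gp).Reachable v0 x) = S
       then graphProb p (phi e gp) else 0)
      = (if numComp gp.1 = s then graphProb p gp.1 else 0) *
        (if gp.2.Connected then graphProb p gp.2 else 0) * (1 - p) ^ (k * m) := by
    rintro ⟨g1, g2⟩
    have hsum : numComp (phi e (g1, g2)) = numComp g1 + numComp g2 :=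
      numComp_comap_sum e g1 g2
    have hcond : (numComp (phi e (g1, g2)) = s + 1 ∧
        Finset.univ.filter (fun x => ¬ (phi e (g1, g2)).Reachable v0 x) = S)
        ↔ (numComp g1 = s ∧ g2.Connected) := by
      constructor
      · rintro ⟨hnc, hfil⟩
        have hconn : g2.Connected := by
          rw [connected_iff_exists_forall_reachable]
          refine ⟨v0', fun b => ?_⟩
          have hb : e.symm (Sum.inr b) ∉ S := by
            rw [hS, Equiv.apply_symm_apply]; simp
          have hr : (phi e (g1, g2)).Reachable v0 (e.symm (Sum.inr b)) := by
            by_contra hr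
            exact hb (hfil ▸ Finset.mem_filter.mpr ⟨Finset.mem_univ _, hr⟩)
          rw [phi_reach, hv0, Equiv.apply_symm_apply] at hr
          exact reach_inr_iff.mp hr
        have h2 : numComp g2 = 1 := connected_iff_natCard.mp hconn
        exact ⟨by omega, hconn⟩
      · rintro ⟨h1, h2⟩
        have hnc2 : numComp g2 = 1 := connected_iff_natCard.mp h2
        refine ⟨by omega, ?_⟩
        ext x
        simp only [Finset.mem_filter, Finset.mem_univ, true_and]
        rw [phi_reach, hv0]
        rcases hx : e x with a | b
        · exact iff_of_true not_reach_inr_inl ((hS x).mpr (by rw [hx]; rfl))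
        · refine iff_of_false ?_ ?_
          · intro h
            exact h (reach_inr_iff.mpr (h2.preconnected v0' b))
          · rw [hS x, hx]; simp
    by_cases h : numComp g1 = s ∧ g2.Connected
    · rw [if_pos (hcond.mpr h), if_pos h.1, if_pos h.2]
      exact graphProb_comap_sum p e g1 g2
    · rw [if_neg (fun hc => h (hcond.mp hc))]
      rcases not_and_or.mp h with h' | h'
      · rw [if_neg h']; ring
      · rw [if_neg h']; ring
  rw [Finset.sum_congr rfl (fun gp _ => hterm gp), Fintype.sum_prod_type]
  have hstep : ∀ g1 : SimpleGraph (Fin k),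
      (∑ g2 : SimpleGraph (Fin m),
        (if numComp g1 = s then graphProb p g1 else 0) *
        (if g2.Connected then graphProb p g2 else 0) * (1 - p) ^ (k * m))
      = (if numComp g1 = s then graphProb p g1 else 0) *
        (∑ g2 : SimpleGraph (Fin m), if g2.Connected then graphProb p g2 else 0) *
        (1 - p) ^ (k * m) := by
    intro g1
    rw [← Finset.sum_mul, ← Finset.mul_sum]
  rw [Finset.sum_congr rfl (fun g1 _ => hstep g1), ← Finset.sum_mul, ← Finset.sum_mul]
  have hPE1 : probEvent k p (fun g => numComp g = s)
      = ∑ g : SimpleGraph (Fin k), if numComp g = s then graphProb p g else 0 := by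
    unfold probEvent
    exact Finset.sum_congr rfl (fun g _ => by by_cases h : numComp g = s <;> simp [h])
  have hPE2 : probEvent m p (fun g => g.Connected)
      = ∑ g : SimpleGraph (Fin m), if g.Connected then graphProb p g else 0 := by
    unfold probEvent
    exact Finset.sum_congr rfl (fun g _ => by by_cases h : g.Connected <;> simp [h])
  rw [hPE1, hPE2]

end NCAux

open NCAux SimpleGraph

theorem numComp_recursion (p : ℝ) (hp0 : 0 ≤ p) (hp1 : p ≤ 1) (n s : ℕ)
    (hs : 1 < s) (hsn : s ≤ n) :
    probEvent n p (fun g => numComp g = s) =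
      ∑ k ∈ Finset.Icc (s - 1) (n - 1),
        (n - 1).choose k * probEvent k p (fun g => numComp g = s - 1) *
          connProb (n - k) p * (1 - p) ^ (k * (n - k)) := by
  classical
  have hn2 : 2 ≤ n := by omega
  set v0 : Fin n := ⟨0, by omega⟩ with hv0def
  -- per-graph regrouping identity
  have hper : ∀ g : SimpleGraph (Fin n),
      (∑ k ∈ Finset.Icc (s - 1) (n - 1),
        ∑ S ∈ Finset.powersetCard k (Finset.univ.erase v0),
          if numComp g = s ∧ Finset.univ.filter (fun x => ¬ g.Reachable v0 x) = S
          then graphProb p g else 0)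
      = if numComp g = s then graphProb p g else 0 := by
    intro g
    by_cases hg : numComp g = s
    · rw [if_pos hg]
      set T := Finset.univ.filter (fun x => ¬ g.Reachable v0 x) with hT
      have hv0T : v0 ∉ T := by
        intro h
        exact (Finset.mem_filter.mp h).2 (SimpleGraph.Reachable.refl v0)
      have hTsub : T ⊆ Finset.univ.erase v0 := by
        intro x hx
        refine Finset.mem_erase.mpr ⟨?_, Finset.mem_univ x⟩
        rintro rfl
        exact hv0T hx
      have hle : T.card ≤ n - 1 := by
        have h := Finset.card_le_card hTsub
        rwa [Finset.card_erase_of_mem (Finset.mem_univ v0), Finset.card_univ,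
          Fintype.card_fin] at h
      have hge : s - 1 ≤ T.card := by
        letI : Fintype g.ConnectedComponent := Fintype.ofFinite _
        have hcc : Fintype.card g.ConnectedComponent = s := by
          rw [← Nat.card_eq_fintype_card]; exact hg
        set C0 := g.connectedComponentMk v0 with hC0
        have hmemT : ∀ c : g.ConnectedComponent, c ≠ C0 → Quot.out c ∈ T := by
          intro c hc
          refine Finset.mem_filter.mpr ⟨Finset.mem_univ _, fun hr => hc ?_⟩
          have h1 : C0 = g.connectedComponentMk (Quot.out c) :=
            SimpleGraph.ConnectedComponent.sound hr
          exact (h1.trans (Quot.out_eq c)).symm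
        have hinj : Function.Injective (fun c : {c : g.ConnectedComponent // c ≠ C0} =>
            (⟨Quot.out c.1, hmemT c.1 c.2⟩ : {x // x ∈ T})) := by
          intro c d h
          have h2 : Quot.out c.1 = Quot.out d.1 := congrArg Subtype.val h
          have h3 : c.1 = d.1 := by
            rw [← Quot.out_eq c.1, ← Quot.out_eq d.1, h2]
          exact Subtype.ext h3
        have hcle := Fintype.card_le_of_injective _ hinj
        have hcompl : Fintype.card {c : g.ConnectedComponent // c ≠ C0} = s - 1 := by
          have h4 := Fintype.card_subtype_compl (fun c : g.ConnectedComponent => c = C0)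
          rw [hcc, Fintype.card_subtype_eq] at h4
          exact h4
        have hTc : Fintype.card {x // x ∈ T} = T.card := Fintype.card_coe T
        omega
      have h1 : ∀ k, (∑ S ∈ Finset.powersetCard k (Finset.univ.erase v0),
          if numComp g = s ∧ T = S then graphProb p g else 0)
          = if T ∈ Finset.powersetCard k (Finset.univ.erase v0) then graphProb p g else 0 := by
        intro k
        have heq : ∀ S, (if numComp g = s ∧ T = S then graphProb p g else 0)
            = (if T = S then graphProb p g else 0) := fun S => by simp [hg]
        rw [Finset.sum_congr rfl fun S _ => heq S, Finset.sum_ite_eq]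
      rw [Finset.sum_congr rfl fun k _ => h1 k]
      have h2 : ∀ k, (T ∈ Finset.powersetCard k (Finset.univ.erase v0)) ↔ T.card = k := by
        intro k
        rw [Finset.mem_powersetCard]
        simp [hTsub]
      rw [Finset.sum_congr rfl fun k _ => if_congr (h2 k) rfl rfl, Finset.sum_ite_eq,
        if_pos]
      rw [Finset.mem_Icc]
      exact ⟨hge, hle⟩
    · simp [hg]
  -- the middle identity, via `key`
  have hmid : ∀ k ∈ Finset.Icc (s - 1) (n - 1),
      ∀ S ∈ Finset.powersetCard k (Finset.univ.erase v0),
      (∑ g : SimpleGraph (Fin n),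
        if numComp g = s ∧ Finset.univ.filter (fun x => ¬ g.Reachable v0 x) = S
        then graphProb p g else 0)
      = probEvent k p (fun g => numComp g = s - 1) * connProb (n - k) p *
          (1 - p) ^ (k * (n - k)) := by
    intro k hk S hSmem
    obtain ⟨hSsub, hScard⟩ := Finset.mem_powersetCard.mp hSmem
    have hv0S : v0 ∉ S := fun h => absurd rfl (Finset.mem_erase.mp (hSsub h)).1
    have hcard1 : Fintype.card {x : Fin n // x ∈ S} = k := by
      simpa [Fintype.card_coe] using hScard
    have hcard2 : Fintype.card {x : Fin n // x ∉ S} = n - k := by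
      rw [Fintype.card_subtype_compl, Fintype.card_fin, hcard1]
    set eqS := Fintype.equivFinOfCardEq hcard1 with heqS
    set eqC := Fintype.equivFinOfCardEq hcard2 with heqC
    set e : Fin n ≃ (Fin k ⊕ Fin (n - k)) :=
      ((Equiv.sumCompl (· ∈ S)).symm.trans (Equiv.sumCongr eqS eqC)) with he
    have hSprop : ∀ x, x ∈ S ↔ (e x).isLeft := by
      intro x
      by_cases hx : x ∈ S
      · simp [he, Equiv.sumCompl_symm_apply_of_pos hx, hx]
      · simp [he, Equiv.sumCompl_symm_apply_of_neg hx, hx]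
    have hv0e : e v0 = Sum.inr (eqC ⟨v0, hv0S⟩) := by
      simp [he, Equiv.sumCompl_symm_apply_of_neg hv0S]
    have hkey := key p (s - 1) n k (n - k) e v0 (eqC ⟨v0, hv0S⟩) hv0e S hSprop
    rw [show s - 1 + 1 = s from by omega] at hkey
    exact hkey
  -- assemble
  have part1 : (∑ k ∈ Finset.Icc (s - 1) (n - 1),
        ∑ S ∈ Finset.powersetCard k (Finset.univ.erase v0),
          ∑ g : SimpleGraph (Fin n),
            if numComp g = s ∧ Finset.univ.filter (fun x => ¬ g.Reachable v0 x) = S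
            then graphProb p g else 0)
      = probEvent n p (fun g => numComp g = s) := by
    rw [Finset.sum_congr rfl fun k _ => Finset.sum_comm, Finset.sum_comm]
    unfold probEvent
    refine Finset.sum_congr rfl fun g _ => (hper g).trans ?_
    by_cases h : numComp g = s <;> simp [h]
  rw [← part1]
  rw [Finset.sum_congr rfl (fun k hk => Finset.sum_congr rfl (fun S hsm => hmid k hk S hsm))]
  refine Finset.sum_congr rfl fun k hk => ?_
  rw [Finset.sum_const, Finset.card_powersetCard,
    Finset.card_erase_of_mem (Finset.mem_univ v0), Finset.card_univ, Fintype.card_fin,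
    nsmul_eq_mul]
  ring
end
end

section
/- For all n ≥ 1 and s ≥ 0, the factorial moments of the component count of G(n,p) satisfy q^{n-1}·E[(ν_{n-1})^{\underline{s}}] ≤ E[(ν_n - 1)^{\underline{s}}] ≤ E[(ν_{n-1})^{\underline{s}}], where q = 1-p. -/
open Classical Finset

noncomputable section

namespace FMS
variable {m : ℕ}

lemma cs_ne_last (u : Fin m) : u.castSucc ≠ Fin.last m := (Fin.castSucc_lt_last u).ne

/-- `Fin.castSucc` as an embedding. -/
def cemb (m : ℕ) : Fin m ↪ Fin (m+1) := ⟨Fin.castSucc, Fin.castSucc_injective m⟩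

/-- The star of edges from the last vertex to the (castSucc image of the) set `S`. -/
def star (m : ℕ) (S : Finset (Fin m)) : SimpleGraph (Fin (m+1)) where
  Adj a b := (a = Fin.last m ∧ ∃ u ∈ S, b = u.castSucc) ∨
    (b = Fin.last m ∧ ∃ u ∈ S, a = u.castSucc)
  symm := by
    constructor
    rintro a b (⟨h1, u, hu, h2⟩ | ⟨h1, u, hu, h2⟩)
    · exact Or.inr ⟨h1, u, hu, h2⟩
    · exact Or.inl ⟨h1, u, hu, h2⟩
  loopless := by
    constructor
    rintro a (⟨rfl, u, hu, h⟩ | ⟨rfl, u, hu, h⟩) <;> exact cs_ne_last u h.symm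

/-- The graph on `Fin (m+1)` built from a graph on `Fin m` plus the neighborhood `S` of
the last vertex. -/
def mk (h : SimpleGraph (Fin m)) (S : Finset (Fin m)) : SimpleGraph (Fin (m+1)) :=
  SimpleGraph.map (cemb m) h ⊔ star m S

lemma star_adj (S : Finset (Fin m)) (a b : Fin (m+1)) :
    (star m S).Adj a b ↔ (a = Fin.last m ∧ ∃ u ∈ S, b = u.castSucc) ∨
      (b = Fin.last m ∧ ∃ u ∈ S, a = u.castSucc) := Iff.rfl

lemma mk_adj (h : SimpleGraph (Fin m)) (S : Finset (Fin m)) (a b : Fin (m+1)) :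
    (mk h S).Adj a b ↔ (∃ u v, h.Adj u v ∧ u.castSucc = a ∧ v.castSucc = b) ∨
      ((a = Fin.last m ∧ ∃ u ∈ S, b = u.castSucc) ∨
      (b = Fin.last m ∧ ∃ u ∈ S, a = u.castSucc)) := by
  simp only [mk, SimpleGraph.sup_adj, SimpleGraph.map_adj, star_adj, cemb,
    Function.Embedding.coeFn_mk]
  exact or_congr_left (SimpleGraph.map_adj (cemb m) h a b)

lemma mk_adj_cast (h : SimpleGraph (Fin m)) (S : Finset (Fin m)) (u v : Fin m) :
    (mk h S).Adj u.castSucc v.castSucc ↔ h.Adj u v := by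
  rw [mk_adj]
  constructor
  · rintro (⟨a, b, hab, ha, hb⟩ | ⟨hl, _⟩ | ⟨hl, _⟩)
    · rwa [Fin.castSucc_injective m ha, Fin.castSucc_injective m hb] at hab
    · exact absurd hl (cs_ne_last u)
    · exact absurd hl (cs_ne_last v)
  · intro hadj; exact Or.inl ⟨u, v, hadj, rfl, rfl⟩

lemma mk_adj_last (h : SimpleGraph (Fin m)) (S : Finset (Fin m)) (b : Fin (m+1)) :
    (mk h S).Adj (Fin.last m) b ↔ ∃ u ∈ S, b = u.castSucc := by
  rw [mk_adj]
  constructor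
  · rintro (⟨a, c, hab, ha, hb⟩ | ⟨hl, u, hu, hb⟩ | ⟨hl, u, hu, ha⟩)
    · exact absurd ha (cs_ne_last a)
    · exact ⟨u, hu, hb⟩
    · exact absurd ha.symm (cs_ne_last u)
  · rintro ⟨u, hu, rfl⟩; exact Or.inr (Or.inl ⟨rfl, u, hu, rfl⟩)

/-- Decomposition of a graph on `Fin (m+1)` into its restriction to `Fin m` and the
neighborhood of the last vertex. -/
def dec (m : ℕ) : SimpleGraph (Fin (m+1)) ≃ SimpleGraph (Fin m) × Finset (Fin m) where
  toFun g := (g.comap Fin.castSucc, Finset.univ.filter (fun u => g.Adj (Fin.last m) u.castSucc))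
  invFun hS := mk hS.1 hS.2
  left_inv g := by
    ext a b
    induction a using Fin.lastCases with
    | last =>
      rw [mk_adj_last]
      induction b using Fin.lastCases with
      | last =>
        simp only [SimpleGraph.irrefl, iff_false]
        rintro ⟨u, hu, hb⟩; exact cs_ne_last u hb.symm
      | cast v =>
        constructor
        · rintro ⟨u, hu, hb⟩
          rw [Fin.castSucc_injective m hb]
          exact (Finset.mem_filter.mp hu).2
        · intro hadj; exact ⟨v, Finset.mem_filter.mpr ⟨Finset.mem_univ v, hadj⟩, rfl⟩
    | cast u =>
      induction b using Fin.lastCases with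
      | last =>
        rw [SimpleGraph.adj_comm, mk_adj_last, SimpleGraph.adj_comm]
        constructor
        · rintro ⟨w, hw, hb⟩
          rw [Fin.castSucc_injective m hb]
          exact (Finset.mem_filter.mp hw).2
        · intro hadj; exact ⟨u, Finset.mem_filter.mpr ⟨Finset.mem_univ u, hadj⟩, rfl⟩
      | cast v => rw [mk_adj_cast]; rfl
  right_inv hS := by
    obtain ⟨h, S⟩ := hS
    refine Prod.ext ?_ ?_
    · ext u v; exact mk_adj_cast h S u v
    · ext u
      simp only [Finset.mem_filter, Finset.mem_univ, true_and, mk_adj_last]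
      constructor
      · rintro ⟨w, hw, hb⟩; rwa [Fin.castSucc_injective m hb]
      · intro hu; exact ⟨u, hu, rfl⟩

lemma dec_symm_apply (m : ℕ) (pr : SimpleGraph (Fin m) × Finset (Fin m)) :
    (dec m).symm pr = mk pr.1 pr.2 := rfl

lemma edgeSet_map (h : SimpleGraph (Fin m)) :
    (SimpleGraph.map (cemb m) h).edgeSet = Sym2.map (cemb m) '' h.edgeSet := by
  ext e
  induction e with
  | _ a b =>
    simp only [SimpleGraph.mem_edgeSet, SimpleGraph.map_adj, Set.mem_image]
    constructor
    · rintro ⟨u, v, huv, hu, hv⟩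
      exact ⟨s(u, v), huv, by rw [Sym2.map_pair_eq, hu, hv]⟩
    · rintro ⟨e', he', hmap⟩
      induction e' with
      | _ u v =>
        rw [Sym2.map_pair_eq, Sym2.eq_iff] at hmap
        rcases hmap with ⟨hu, hv⟩ | ⟨hu, hv⟩
        · exact ⟨u, v, he', hu, hv⟩
        · exact ⟨v, u, (SimpleGraph.mem_edgeSet h).mp he' |>.symm, hv, hu⟩

lemma edgeSet_star (S : Finset (Fin m)) :
    (star m S).edgeSet = (fun u : Fin m => s(Fin.last m, u.castSucc)) '' S := by
  ext e
  induction e with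
  | _ a b =>
    simp only [SimpleGraph.mem_edgeSet, star, Set.mem_image]
    constructor
    · rintro (⟨rfl, u, hu, rfl⟩ | ⟨rfl, u, hu, rfl⟩)
      · exact ⟨u, hu, rfl⟩
      · exact ⟨u, hu, Sym2.eq_swap⟩
    · rintro ⟨u, hu, he⟩
      rw [Sym2.eq_iff] at he
      rcases he with ⟨ha, hb⟩ | ⟨ha, hb⟩
      · exact Or.inl ⟨ha.symm, u, hu, hb.symm⟩
      · exact Or.inr ⟨ha.symm, u, hu, hb.symm⟩

lemma ncard_edgeSet_mk (h : SimpleGraph (Fin m)) (S : Finset (Fin m)) :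
    (mk h S).edgeSet.ncard = h.edgeSet.ncard + S.card := by
  have hdisj : Disjoint (SimpleGraph.map (cemb m) h).edgeSet (star m S).edgeSet := by
    rw [Set.disjoint_left, edgeSet_map, edgeSet_star]
    rintro e ⟨e', he', rfl⟩ ⟨u, hu, heq⟩
    induction e' with
    | _ a b =>
      rw [Sym2.map_pair_eq, Sym2.eq_iff] at heq
      rcases heq with ⟨ha, _⟩ | ⟨hb, _⟩
      · exact cs_ne_last a ha.symm
      · exact cs_ne_last b hb.symm
  have hm : (SimpleGraph.map (cemb m) h).edgeSet.ncard = h.edgeSet.ncard := by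
    rw [edgeSet_map]
    exact Set.ncard_image_of_injective _ (Sym2.map.injective (cemb m).injective)
  have hs : (star m S).edgeSet.ncard = S.card := by
    rw [edgeSet_star]
    rw [Set.ncard_image_of_injOn]
    · exact Set.ncard_coe_finset S
    · intro u _ v _ he
      rw [Sym2.eq_iff] at he
      rcases he with ⟨_, hb⟩ | ⟨ha, hb⟩
      · exact Fin.castSucc_injective m hb
      · exact absurd ha.symm (cs_ne_last v)
  rw [mk, SimpleGraph.edgeSet_sup, Set.ncard_union_eq hdisj
    (Set.toFinite _) (Set.toFinite _), hm, hs]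

/-- `Fin.castSucc` as a graph homomorphism `h →g mk h S`. -/
def hom (h : SimpleGraph (Fin m)) (S : Finset (Fin m)) : h →g mk h S where
  toFun := Fin.castSucc
  map_rel' := fun {u v} huv => (mk_adj_cast h S u v).mpr huv

/-- The comparison map between connected components. -/
def phi (h : SimpleGraph (Fin m)) (S : Finset (Fin m)) :
    h.ConnectedComponent ⊕ Unit → (mk h S).ConnectedComponent :=
  Sum.elim (SimpleGraph.ConnectedComponent.map (hom h S))
    (fun _ => (mk h S).connectedComponentMk (Fin.last m))

lemma phi_surj (h : SimpleGraph (Fin m)) (S : Finset (Fin m)) :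
    Function.Surjective (phi h S) := by
  intro c
  induction c using SimpleGraph.ConnectedComponent.ind with
  | _ a =>
    induction a using Fin.lastCases with
    | last => exact ⟨Sum.inr (), rfl⟩
    | cast u => exact ⟨Sum.inl (h.connectedComponentMk u), rfl⟩

lemma numComp_mk_le (h : SimpleGraph (Fin m)) (S : Finset (Fin m)) :
    numComp (mk h S) ≤ numComp h + 1 := by
  have := Nat.card_le_card_of_surjective (phi h S) (phi_surj h S)
  have h2 : Nat.card Unit = 1 := Nat.card_unique
  rwa [Nat.card_sum, h2] at this

lemma reach_last (h : SimpleGraph (Fin m)) {a : Fin (m+1)} :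
    (mk h (∅ : Finset (Fin m))).Reachable (Fin.last m) a → a = Fin.last m := by
  rintro ⟨w⟩
  cases w with
  | nil => rfl
  | cons hadj w =>
    rw [mk_adj_last] at hadj
    obtain ⟨u, hu, -⟩ := hadj
    exact absurd hu (Finset.notMem_empty u)

lemma walk_proj (h : SimpleGraph (Fin m)) {a b : Fin (m+1)}
    (w : (mk h (∅ : Finset (Fin m))).Walk a b) :
    ∀ u v : Fin m, a = u.castSucc → b = v.castSucc → h.Reachable u v := by
  induction w with
  | nil =>
    rintro u v rfl hb
    rw [Fin.castSucc_injective m hb]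
  | @cons a c b hadj w ih =>
    rintro u v rfl rfl
    induction c using Fin.lastCases with
    | last =>
      rw [SimpleGraph.adj_comm, mk_adj_last] at hadj
      obtain ⟨x, hx, -⟩ := hadj
      exact absurd hx (Finset.notMem_empty x)
    | cast c' =>
      rw [mk_adj_cast] at hadj
      exact hadj.reachable.trans (ih c' v rfl rfl)

lemma phi_inj (h : SimpleGraph (Fin m)) :
    Function.Injective (phi h (∅ : Finset (Fin m))) := by
  rintro (d1 | ⟨⟩) (d2 | ⟨⟩) heq
  · induction d1 using SimpleGraph.ConnectedComponent.ind with
    | _ u =>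
      induction d2 using SimpleGraph.ConnectedComponent.ind with
      | _ v =>
        simp only [phi, Sum.elim_inl, SimpleGraph.ConnectedComponent.map_mk] at heq
        have hr := SimpleGraph.ConnectedComponent.eq.mp heq
        obtain ⟨w⟩ := hr
        exact congrArg Sum.inl (SimpleGraph.ConnectedComponent.eq.mpr
          (walk_proj h w u v rfl rfl))
  · exfalso
    induction d1 using SimpleGraph.ConnectedComponent.ind with
    | _ u =>
      simp only [phi, Sum.elim_inl, Sum.elim_inr, SimpleGraph.ConnectedComponent.map_mk] at heq
      have hr := (SimpleGraph.ConnectedComponent.eq.mp heq).symm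
      exact cs_ne_last u (reach_last h hr)
  · exfalso
    induction d2 using SimpleGraph.ConnectedComponent.ind with
    | _ u =>
      simp only [phi, Sum.elim_inl, Sum.elim_inr, SimpleGraph.ConnectedComponent.map_mk] at heq
      have hr := SimpleGraph.ConnectedComponent.eq.mp heq.symm |>.symm
      exact cs_ne_last u (reach_last h hr)
  · rfl

lemma numComp_mk_empty (h : SimpleGraph (Fin m)) :
    numComp (mk h (∅ : Finset (Fin m))) = numComp h + 1 := by
  have := Nat.card_eq_of_bijective (phi h ∅) ⟨phi_inj h, phi_surj h ∅⟩
  have h2 : Nat.card Unit = 1 := Nat.card_unique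
  rw [Nat.card_sum, h2] at this
  exact this.symm

lemma ncard_edgeSet_le (h : SimpleGraph (Fin m)) : h.edgeSet.ncard ≤ m.choose 2 := by
  rw [Set.ncard_eq_toFinset_card']
  have := h.card_edgeFinset_le_card_choose_two
  rwa [Fintype.card_fin, SimpleGraph.edgeFinset] at this

lemma graphProb_mk (p : ℝ) (h : SimpleGraph (Fin m)) (S : Finset (Fin m)) :
    graphProb p (mk h S) = graphProb p h * (p ^ S.card * (1 - p) ^ (m - S.card)) := by
  have he : h.edgeSet.ncard ≤ m.choose 2 := ncard_edgeSet_le h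
  have hk : S.card ≤ m := by
    have := Finset.card_le_card (Finset.subset_univ S)
    rwa [Finset.card_univ, Fintype.card_fin] at this
  have hch : (m+1).choose 2 = m.choose 2 + m := by
    rw [Nat.choose_succ_succ, Nat.choose_one_right, Nat.add_comm]
  rw [graphProb, graphProb, ncard_edgeSet_mk, hch]
  have hexp : m.choose 2 + m - (h.edgeSet.ncard + S.card)
      = (m.choose 2 - h.edgeSet.ncard) + (m - S.card) := by omega
  rw [hexp, pow_add, pow_add]
  ring

lemma sum_weights (p : ℝ) : ∑ S : Finset (Fin m), p ^ S.card * (1 - p) ^ (m - S.card) = 1 := by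
  have := Finset.prod_add (fun _ : Fin m => p) (fun _ : Fin m => (1 - p)) Finset.univ
  simp only [Finset.prod_const, Finset.card_univ, Fintype.card_fin] at this
  rw [show p + (1 - p) = 1 by ring, one_pow] at this
  rw [← Finset.powerset_univ]
  refine Eq.trans (Finset.sum_congr rfl fun S hS => ?_) this.symm
  rw [Finset.card_sdiff_of_subset (Finset.subset_univ S), Finset.card_univ, Fintype.card_fin]

end FMS

theorem fallingMoment_sandwich (p : ℝ) (hp0 : 0 ≤ p) (hp1 : p ≤ 1) (n s : ℕ) (hn : 1 ≤ n) :
    (1 - p) ^ (n - 1) * EfallNu (n - 1) p s ≤ Efall n p s ∧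
      Efall n p s ≤ EfallNu (n - 1) p s := by
  obtain ⟨m, rfl⟩ : ∃ m, n = m + 1 := ⟨n - 1, (Nat.succ_pred_eq_of_pos hn).symm⟩
  simp only [Nat.add_sub_cancel]
  have hq : (0:ℝ) ≤ 1 - p := by linarith
  have hGP : ∀ (h : SimpleGraph (Fin m)), 0 ≤ graphProb p h :=
    fun h => mul_nonneg (pow_nonneg hp0 _) (pow_nonneg hq _)
  have key : Efall (m+1) p s = ∑ h : SimpleGraph (Fin m), ∑ S : Finset (Fin m),
      ((numComp (FMS.mk h S) - 1).descFactorial s : ℝ)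
        * (graphProb p h * (p ^ S.card * (1 - p) ^ (m - S.card))) := by
    have e1 : ∀ g : SimpleGraph (Fin (m+1)), FMS.mk (FMS.dec m g).1 (FMS.dec m g).2 = g :=
      fun g => by
        rw [← FMS.dec_symm_apply]; exact (FMS.dec m).symm_apply_apply g
    rw [Efall, Fintype.sum_equiv (FMS.dec m)
      (fun g => ((numComp g - 1).descFactorial s : ℝ) * graphProb p g)
      (fun pr => ((numComp (FMS.mk pr.1 pr.2) - 1).descFactorial s : ℝ)
        * (graphProb p pr.1 * (p ^ pr.2.card * (1 - p) ^ (m - pr.2.card))))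
      (fun g => by rw [← FMS.graphProb_mk, e1 g])]
    exact Fintype.sum_prod_type _
  constructor
  · -- lower bound
    rw [key, EfallNu, Finset.mul_sum]
    apply Finset.sum_le_sum
    intro h _
    have hsingle : ({∅} : Finset (Finset (Fin m))) ⊆ Finset.univ := Finset.subset_univ _
    calc (1 - p) ^ m * (((numComp h).descFactorial s : ℝ) * graphProb p h)
        = ∑ S ∈ ({∅} : Finset (Finset (Fin m))),
            ((numComp (FMS.mk h S) - 1).descFactorial s : ℝ)
              * (graphProb p h * (p ^ S.card * (1 - p) ^ (m - S.card))) := by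
          rw [Finset.sum_singleton, FMS.numComp_mk_empty, Nat.add_sub_cancel,
            Finset.card_empty, pow_zero, Nat.sub_zero, one_mul]
          ring
      _ ≤ ∑ S : Finset (Fin m), ((numComp (FMS.mk h S) - 1).descFactorial s : ℝ)
              * (graphProb p h * (p ^ S.card * (1 - p) ^ (m - S.card))) := by
          apply Finset.sum_le_sum_of_subset_of_nonneg hsingle
          intro S _ _
          exact mul_nonneg (Nat.cast_nonneg _) (mul_nonneg (hGP h)
            (mul_nonneg (pow_nonneg hp0 _) (pow_nonneg hq _)))
  · rw [key, EfallNu]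
    apply Finset.sum_le_sum
    intro h _
    calc ∑ S : Finset (Fin m), ((numComp (FMS.mk h S) - 1).descFactorial s : ℝ)
          * (graphProb p h * (p ^ S.card * (1 - p) ^ (m - S.card)))
        ≤ ∑ S : Finset (Fin m), ((numComp h).descFactorial s : ℝ)
          * (graphProb p h * (p ^ S.card * (1 - p) ^ (m - S.card))) := by
          apply Finset.sum_le_sum
          intro S _
          apply mul_le_mul_of_nonneg_right
          · exact_mod_cast Nat.descFactorial_le s (by have := FMS.numComp_mk_le h S; omega)
          · exact mul_nonneg (hGP h) (mul_nonneg (pow_nonneg hp0 _) (pow_nonneg hq _))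
      _ = ((numComp h).descFactorial s : ℝ) * graphProb p h := by
          rw [← Finset.mul_sum, ← Finset.mul_sum, FMS.sum_weights, mul_one]
end
end

section
/- Fix n and let p → 0. Then P(ν_n = s) = F_{s,n} p^{n-s} + O(p^{n-s+1}) for each s ≤ n, where F_{s,n} is the number of labeled forests on n vertices with exactly s trees. In particular, p_n = n^{n-2} p^{n-1} + O(p^n). -/
open Classical Finset

noncomputable section

open Filter Topology Asymptotics

/-- Number of labeled forests on `n` vertices with exactly `s` tree components. -/
def forestCount (s n : ℕ) : ℕ :=
  Nat.card {g : SimpleGraph (Fin n) // g.IsAcyclic ∧ numComp g = s}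


lemma keyAnalysis (n k : ℕ) (P : SimpleGraph (Fin n) → Prop)
    (hk : ∀ g, P g → k ≤ g.edgeSet.ncard)
    (c : ℕ) (hc : c = Nat.card {g : SimpleGraph (Fin n) // P g ∧ g.edgeSet.ncard = k}) :
    (fun p : ℝ => probEvent n p P - (c : ℝ) * p ^ k) =O[𝓝[>] (0:ℝ)] fun p : ℝ => p ^ (k+1) := by
  set G : ℝ → ℝ := fun p => ∑ g : SimpleGraph (Fin n),
    if P g then p ^ (g.edgeSet.ncard - k) * (1 - p) ^ (n.choose 2 - g.edgeSet.ncard) else 0 with hG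
  have hsplit : ∀ p : ℝ, probEvent n p P = p ^ k * G p := by
    intro p
    rw [hG, Finset.mul_sum, probEvent]
    refine Finset.sum_congr rfl fun g _ => ?_
    by_cases h : P g
    · simp only [h, if_true, graphProb]
      rw [← mul_assoc, ← pow_add]
      congr 2
      have := hk g h; omega
    · simp [h]
  have hG0 : G 0 = (c : ℝ) := by
    rw [hG]
    have : (c : ℝ) = ∑ g : SimpleGraph (Fin n),
        if P g ∧ g.edgeSet.ncard = k then (1:ℝ) else 0 := by
      rw [hc, Nat.card_eq_fintype_card, Fintype.card_subtype, Finset.card_filter]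
      push_cast
      rfl
    rw [this]
    refine Finset.sum_congr rfl fun g _ => ?_
    by_cases h : P g
    · by_cases h2 : g.edgeSet.ncard = k
      · simp [h, h2]
      · have : g.edgeSet.ncard - k ≠ 0 := by have := hk g h; omega
        simp [h, h2, zero_pow this]
    · simp [h]
  have hdiff : DifferentiableAt ℝ G 0 := by
    rw [hG]
    apply DifferentiableAt.fun_sum
    intro g _
    by_cases h : P g
    · simp only [h, if_true]
      exact ((differentiableAt_pow _).mul (((differentiableAt_const _).sub differentiableAt_id).pow _))
    · simp only [h, if_false]
      exact differentiableAt_const 0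
  have h1 : (fun p : ℝ => G p - G 0) =O[𝓝 (0:ℝ)] fun p : ℝ => p := by
    simpa using hdiff.isBigO_sub
  have h2 : (fun p : ℝ => p ^ k * (G p - G 0)) =O[𝓝 (0:ℝ)] fun p : ℝ => p ^ (k+1) := by
    have := (isBigO_refl (fun p : ℝ => p ^ k) (𝓝 (0:ℝ))).mul h1
    simpa [pow_succ] using this
  have heq : (fun p : ℝ => probEvent n p P - (c:ℝ) * p ^ k) = fun p : ℝ => p ^ k * (G p - G 0) := by
    funext p
    rw [hsplit p, hG0]; ring
  rw [heq]
  exact h2.mono nhdsWithin_le_nhds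


namespace PfAux
section Graphs
variable {V : Type*} [Fintype V]

abbrev nc (G : SimpleGraph V) : ℕ := Nat.card G.ConnectedComponent

lemma walk_reach {G : SimpleGraph V} {v w : V} {x y : V} (p : G.Walk x y) :
    letI G' := G \ SimpleGraph.fromEdgeSet {s(v,w)}
    G'.Reachable x y ∨ (G'.Reachable x v ∧ G'.Reachable w y) ∨
      (G'.Reachable x w ∧ G'.Reachable v y) := by
  set G' := G \ SimpleGraph.fromEdgeSet {s(v,w)} with hG'
  induction p with
  | nil => exact Or.inl (SimpleGraph.Reachable.refl _)
  | @cons a b c hab q ih =>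
    by_cases he : s(a,b) = s(v,w)
    · rw [Sym2.eq_iff] at he
      rcases he with ⟨rfl, rfl⟩ | ⟨rfl, rfl⟩
      · rcases ih with h | ⟨h1, h2⟩ | ⟨h1, h2⟩
        · exact Or.inr (Or.inl ⟨SimpleGraph.Reachable.refl _, h⟩)
        · exact Or.inr (Or.inl ⟨SimpleGraph.Reachable.refl _, h2⟩)
        · exact Or.inl h2
      · rcases ih with h | ⟨h1, h2⟩ | ⟨h1, h2⟩
        · exact Or.inr (Or.inr ⟨SimpleGraph.Reachable.refl _, h⟩)
        · exact Or.inl h2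
        · exact Or.inr (Or.inr ⟨SimpleGraph.Reachable.refl _, h2⟩)
    · have hadj : G'.Adj a b := by
        rw [hG']
        simp only [SimpleGraph.sdiff_adj, SimpleGraph.fromEdgeSet_adj]
        exact ⟨hab, fun hcon => he hcon.1⟩
      have hr : G'.Reachable a b := hadj.reachable
      rcases ih with h | ⟨h1, h2⟩ | ⟨h1, h2⟩
      · exact Or.inl (hr.trans h)
      · exact Or.inr (Or.inl ⟨hr.trans h1, h2⟩)
      · exact Or.inr (Or.inr ⟨hr.trans h1, h2⟩)

lemma reach_of_del {G : SimpleGraph V} {e : Sym2 V} {x y : V}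
    (h : (G \ SimpleGraph.fromEdgeSet {e}).Reachable x y) : G.Reachable x y :=
  h.mono (by simp)

lemma nc_del_not_bridge {G : SimpleGraph V} {v w : V} (hvw : s(v,w) ∈ G.edgeSet)
    (hnb : ¬ G.IsBridge s(v,w)) :
    nc (G \ SimpleGraph.fromEdgeSet {s(v,w)}) = nc G := by
  set G' := G \ SimpleGraph.fromEdgeSet {s(v,w)} with hG'
  have hadj : G.Adj v w := hvw
  have hrvw : G'.Reachable v w := by
    by_contra hcon
    exact hnb hcon
  have hiff : ∀ x y : V, G'.Reachable x y ↔ G.Reachable x y := by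
    intro x y
    constructor
    · exact reach_of_del
    · rintro ⟨p⟩
      rcases walk_reach (v := v) (w := w) p with h | ⟨h1, h2⟩ | ⟨h1, h2⟩
      · exact h
      · exact (h1.trans hrvw).trans h2
      · exact (h1.trans hrvw.symm).trans h2
  exact Nat.card_congr (Quot.congrRight hiff)

lemma nc_del_bridge {G : SimpleGraph V} {v w : V} (hvw : s(v,w) ∈ G.edgeSet) (hb : G.IsBridge s(v,w)) :
    nc (G \ SimpleGraph.fromEdgeSet {s(v,w)}) = nc G + 1 := by
  set G' := G \ SimpleGraph.fromEdgeSet {s(v,w)} with hG'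
  have hle : G' ≤ G := by simp [hG']
  have hadj : G.Adj v w := hvw
  have hnr : ¬ G'.Reachable v w := by
    exact hb
  set φ : G'.ConnectedComponent → G.ConnectedComponent :=
    SimpleGraph.ConnectedComponent.map (SimpleGraph.Hom.ofLE hle) with hφ
  have hφmk : ∀ x : V, φ (G'.connectedComponentMk x) = G.connectedComponentMk x := by
    intro x; rfl
  set cw := G'.connectedComponentMk w with hcw
  set to' : G'.ConnectedComponent → G.ConnectedComponent ⊕ Unit :=
    fun c => if c = cw then Sum.inr () else Sum.inl (φ c) with hto
  have hbij : Function.Bijective to' := by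
    constructor
    · intro c1 c2 h
      induction c1 using SimpleGraph.ConnectedComponent.ind with | _ x =>
      induction c2 using SimpleGraph.ConnectedComponent.ind with | _ y =>
      rw [hto] at h
      by_cases h1 : G'.connectedComponentMk x = cw
      · by_cases h2 : G'.connectedComponentMk y = cw
        · rw [h1, h2]
        · simp only [h1, h2, if_true, if_false] at h; cases h
      · by_cases h2 : G'.connectedComponentMk y = cw
        · simp only [h1, h2, if_true, if_false] at h; cases h
        · simp only [h1, h2, if_false, Sum.inl.injEq, hφmk] at h
          have hxy : G.Reachable x y := (SimpleGraph.ConnectedComponent.eq).mp h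
          rcases hxy with ⟨p⟩
          rcases walk_reach (v := v) (w := w) p with hr | ⟨hr1, hr2⟩ | ⟨hr1, hr2⟩
          · exact SimpleGraph.ConnectedComponent.sound hr
          · exact absurd ((SimpleGraph.ConnectedComponent.sound hr2.symm) : _) h2
          · exact absurd ((SimpleGraph.ConnectedComponent.sound hr1) : _) h1
    · rintro (c | u)
      · induction c using SimpleGraph.ConnectedComponent.ind with | _ x =>
        by_cases hx : G'.connectedComponentMk x = cw
        · refine ⟨G'.connectedComponentMk v, ?_⟩
          have hv : G'.connectedComponentMk v ≠ cw := by
            rw [hcw]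
            intro hcon
            exact hnr ((SimpleGraph.ConnectedComponent.eq).mp hcon)
          rw [hto]
          simp only [hv, if_false, hφmk, Sum.inl.injEq]
          have : G.Reachable x w := reach_of_del ((SimpleGraph.ConnectedComponent.eq).mp hx)
          exact (SimpleGraph.ConnectedComponent.sound ((hadj.reachable.trans this.symm).symm)).symm
        · exact ⟨G'.connectedComponentMk x, by rw [hto]; simp [hx, hφmk]⟩
      · exact ⟨cw, by rw [hto]; simp⟩
  have hcard := Nat.card_eq_of_bijective to' hbij
  rw [Nat.card_sum] at hcard
  simpa using hcard
lemma nc_bot : nc (⊥ : SimpleGraph V) = Fintype.card V := by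
  have : Function.Bijective ((⊥ : SimpleGraph V).connectedComponentMk) := by
    constructor
    · intro a b h
      have := (SimpleGraph.ConnectedComponent.eq).mp h
      exact this.elim fun p => p.eq_of_length_eq_zero (by
        cases p with
        | nil => rfl
        | cons h q => exact absurd h (by simp))
    · exact SimpleGraph.ConnectedComponent.ind (fun v => ⟨v, rfl⟩)
  rw [show Fintype.card V = Nat.card V from (Nat.card_eq_fintype_card).symm]
  exact (Nat.card_eq_of_bijective _ this).symm




omit [Fintype V] in
lemma edgeSet_del (G : SimpleGraph V) (e : Sym2 V) (he : e ∈ G.edgeSet) :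
    (G \ SimpleGraph.fromEdgeSet {e}).edgeSet = G.edgeSet \ {e} := by
  have hnd : ¬ e.IsDiag := SimpleGraph.not_isDiag_of_mem_edgeSet G he
  rw [SimpleGraph.edgeSet_sdiff, SimpleGraph.edgeSet_fromEdgeSet]
  ext f
  simp only [Set.mem_diff, Set.mem_singleton_iff, Set.mem_setOf_eq, not_and, not_not]
  constructor
  · rintro ⟨hf, h2⟩
    refine ⟨hf, fun hfe => ?_⟩
    subst hfe
    exact (SimpleGraph.not_isDiag_of_mem_edgeSet G hf) (h2 rfl)
  · rintro ⟨hf, h2⟩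
    exact ⟨hf, fun hfe => absurd hfe h2⟩

lemma ncard_del (G : SimpleGraph V) (e : Sym2 V) (he : e ∈ G.edgeSet) :
    (G \ SimpleGraph.fromEdgeSet {e}).edgeSet.ncard = G.edgeSet.ncard - 1 := by
  rw [edgeSet_del G e he, Set.ncard_diff_singleton_of_mem he]

lemma card_le_aux : ∀ (m : ℕ) (G : SimpleGraph V), G.edgeSet.ncard = m →
    Fintype.card V ≤ m + nc G := by
  intro m
  induction m using Nat.strong_induction_on with
  | _ m ih =>
    intro G hm
    rcases Nat.eq_zero_or_pos m with rfl | hpos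
    · have hE : G.edgeSet = ∅ := by
        rwa [Set.ncard_eq_zero (Set.toFinite _)] at hm
      have hbot : G = ⊥ := by rwa [← SimpleGraph.edgeSet_eq_empty]
      rw [hbot, nc_bot]; omega
    · have hne : G.edgeSet.Nonempty := by
        rw [Set.nonempty_iff_ne_empty]
        intro hcon
        rw [hcon, Set.ncard_empty] at hm; omega
      obtain ⟨e, he⟩ := hne
      induction e using Sym2.ind with
      | _ v w =>
        set G' := G \ SimpleGraph.fromEdgeSet {s(v,w)} with hG'
        have hm' : G'.edgeSet.ncard = m - 1 := by rw [hG', ncard_del G _ he, hm]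
        have hih := ih (m-1) (by omega) G' hm'
        have hnc : nc G' ≤ nc G + 1 := by
          by_cases hb : G.IsBridge s(v,w)
          · rw [hG', nc_del_bridge he hb]
          · rw [hG', nc_del_not_bridge he hb]; omega
        omega

lemma card_le (G : SimpleGraph V) : Fintype.card V ≤ G.edgeSet.ncard + nc G :=
  card_le_aux _ G rfl

lemma acyclic_count_aux : ∀ (m : ℕ) (G : SimpleGraph V), G.edgeSet.ncard = m →
    G.IsAcyclic → m + nc G = Fintype.card V := by
  intro m
  induction m using Nat.strong_induction_on with
  | _ m ih =>
    intro G hm hac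
    rcases Nat.eq_zero_or_pos m with rfl | hpos
    · have hE : G.edgeSet = ∅ := by
        rwa [Set.ncard_eq_zero (Set.toFinite _)] at hm
      have hbot : G = ⊥ := by rwa [← SimpleGraph.edgeSet_eq_empty]
      rw [hbot, nc_bot]; omega
    · have hne : G.edgeSet.Nonempty := by
        rw [Set.nonempty_iff_ne_empty]
        intro hcon
        rw [hcon, Set.ncard_empty] at hm; omega
      obtain ⟨e, he⟩ := hne
      induction e using Sym2.ind with
      | _ v w =>
        set G' := G \ SimpleGraph.fromEdgeSet {s(v,w)} with hG'
        have hm' : G'.edgeSet.ncard = m - 1 := by rw [hG', ncard_del G _ he, hm]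
        have hb : G.IsBridge s(v,w) :=
          (SimpleGraph.isAcyclic_iff_forall_edge_isBridge.mp hac) he
        have hac' : G'.IsAcyclic := by
          intro x p hp
          have hle : G' ≤ G := by rw [hG']; exact sdiff_le
          have := hp.map (f := SimpleGraph.Hom.ofLE hle)
            (Function.injective_id)
          exact hac _ this
        have hih := ih (m-1) (by omega) G' hm' hac'
        rw [hG', nc_del_bridge he hb] at hih
        omega

lemma acyclic_count (G : SimpleGraph V) (hac : G.IsAcyclic) :
    G.edgeSet.ncard + nc G = Fintype.card V :=
  acyclic_count_aux _ G rfl hac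

lemma acyclic_of_count (G : SimpleGraph V)
    (h : G.edgeSet.ncard + nc G = Fintype.card V) : G.IsAcyclic := by
  rw [SimpleGraph.isAcyclic_iff_forall_edge_isBridge]
  intro e he
  induction e using Sym2.ind with
  | _ v w =>
    by_contra hnb
    set G' := G \ SimpleGraph.fromEdgeSet {s(v,w)} with hG'
    have hpos : 1 ≤ G.edgeSet.ncard := by
      have : G.edgeSet.Nonempty := ⟨_, he⟩
      have := Set.ncard_pos (Set.toFinite G.edgeSet) |>.mpr this
      omega
    have hm' : G'.edgeSet.ncard = G.edgeSet.ncard - 1 := ncard_del G _ he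
    have hnc : nc G' = nc G := nc_del_not_bridge he hnb
    have := card_le G'
    omega

lemma connected_iff_nc (G : SimpleGraph V) [Nonempty V] : G.Connected ↔ nc G = 1 := by
  constructor
  · intro hc
    rw [Nat.card_eq_one_iff_unique]
    constructor
    · constructor
      intro c d
      induction c using SimpleGraph.ConnectedComponent.ind with | _ x =>
      induction d using SimpleGraph.ConnectedComponent.ind with | _ y =>
      exact SimpleGraph.ConnectedComponent.sound (hc.preconnected x y)
    · exact ⟨G.connectedComponentMk Classical.ofNonempty⟩
  · intro h
    have hsub : Subsingleton G.ConnectedComponent := (Nat.card_eq_one_iff_unique.mp h).1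
    refine ⟨fun x y => ?_⟩
    have : G.connectedComponentMk x = G.connectedComponentMk y := Subsingleton.elim _ _
    exact (SimpleGraph.ConnectedComponent.eq).mp this


end Graphs

section Prufer


variable {V : Type*} [LinearOrder V]

/-- vertices of `s` with no `f`-child inside `s`. -/
def leaves (s : Finset V) (f : V → V) : Finset V := s.filter (fun v => ∀ u ∈ s, f u ≠ v)

/-- `f` is a parent function of a forest on `s` converging to root `r`. -/
def GoodOn (s : Finset V) (r : V) (f : V → V) : Prop :=
  r ∉ s ∧ (∀ v, v ∉ s → f v = v) ∧ ∀ v ∈ s, ∃ k, f^[k] v = r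

def enc (r : V) : ℕ → Finset V → (V → V) → List V
  | 0, _, _ => []
  | (k+1), s, f =>
    if s.card ≤ 1 then [] else
      let ℓ := (WithBot.unbotD r ((leaves s f).max))
      f ℓ :: enc r k (s.erase ℓ) (Function.update f ℓ ℓ)

def dec (r : V) : ℕ → Finset V → List V → (V → V)
  | 0, _, _ => id
  | (k+1), s, code =>
    if s.card ≤ 1 then
      (if s.card = 1 then Function.update id ((WithBot.unbotD r (s.max))) r else id)
    else
      match code with
      | [] => id
      | a :: tail =>
        let ℓ := (WithBot.unbotD r ((s \ (a :: tail).toFinset).max))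
        Function.update (dec r k (s.erase ℓ) tail) ℓ a

lemma iterate_frozen (f : V → V) (x : V) (h : f x = x) (k : ℕ) : f^[k] x = x := by
  induction k with
  | zero => rfl
  | succ k ih => rw [Function.iterate_succ_apply', ih, h]

lemma iterate_congr {f : V → V} {ℓ a v : V} (hv : ∀ j, f^[j] v ≠ ℓ) (k : ℕ) :
    (Function.update f ℓ a)^[k] v = f^[k] v := by
  induction k with
  | zero => rfl
  | succ k ih =>
    rw [Function.iterate_succ_apply', Function.iterate_succ_apply', ih,
      Function.update_of_ne (hv k)]

variable {s : Finset V} {r : V} {f : V → V}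

lemma GoodOn.ne_self (hf : GoodOn s r f) {v : V} (hv : v ∈ s) : f v ≠ v := by
  intro hcon
  obtain ⟨k, hk⟩ := hf.2.2 v hv
  rw [iterate_frozen f v hcon k] at hk
  exact hf.1 (hk ▸ hv)

lemma GoodOn.escape (hf : GoodOn s r f) {v : V} (hv : v ∈ s) : f v ∈ s ∨ f v = r := by
  by_contra hcon
  push_neg at hcon
  obtain ⟨h1, h2⟩ := hcon
  have hfrozen : ∀ k, 1 ≤ k → f^[k] v = f v := by
    intro k hk
    obtain ⟨k, rfl⟩ := Nat.exists_eq_add_of_le hk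
    rw [add_comm, Function.iterate_add_apply, Function.iterate_one]
    exact iterate_frozen f (f v) (hf.2.1 _ h1) k
  obtain ⟨k, hk⟩ := hf.2.2 v hv
  rcases Nat.eq_zero_or_pos k with rfl | hpos
  · exact hf.1 (hk ▸ hv)
  · rw [hfrozen k hpos] at hk
    exact h2 hk

lemma GoodOn.iterate_mem (hf : GoodOn s r f) {v : V} (hv : v ∈ s) (j : ℕ) :
    f^[j] v ∈ s ∨ f^[j] v = r := by
  induction j with
  | zero => exact Or.inl hv
  | succ j ih =>
    rw [Function.iterate_succ_apply']
    rcases ih with h | h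
    · exact hf.escape h
    · right; rw [h]; exact hf.2.1 r hf.1

lemma GoodOn.iterate_ne_leaf (hf : GoodOn s r f) {v ℓ : V} (hv : v ∈ s) (hvℓ : v ≠ ℓ)
    (hℓ : ℓ ∈ leaves s f) (j : ℕ) : f^[j] v ≠ ℓ := by
  have hℓs : ℓ ∈ s := (Finset.mem_filter.mp hℓ).1
  cases j with
  | zero => exact hvℓ
  | succ j =>
    intro hcon
    rw [Function.iterate_succ_apply'] at hcon
    rcases hf.iterate_mem hv j with h | h
    · exact (Finset.mem_filter.mp hℓ).2 _ h hcon
    · rw [h, hf.2.1 r hf.1] at hcon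
      exact hf.1 (hcon ▸ hℓs)

/-- rank function -/
def rk (r : V) (f : V → V) (v : V) : ℕ := if h : ∃ k, f^[k] v = r then Nat.find h else 0

lemma rk_succ (hv : v ≠ r) (h : ∃ k, f^[k] v = r) :
    (∃ k, f^[k] (f v) = r) ∧ rk r f v = rk r f (f v) + 1 := by
  have hfind := Nat.find_spec h
  have hpos : 0 < Nat.find h := by
    rcases Nat.eq_zero_or_pos (Nat.find h) with h0 | h0
    · exfalso; apply hv; rw [h0] at hfind; exact hfind
    · exact h0
  have h2 : ∃ k, f^[k] (f v) = r := by
    refine ⟨Nat.find h - 1, ?_⟩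
    rw [← Function.iterate_succ_apply, Nat.succ_eq_add_one, Nat.sub_add_cancel hpos]
    exact hfind
  refine ⟨h2, ?_⟩
  rw [rk, rk, dif_pos h, dif_pos h2]
  have hle : Nat.find h2 ≤ Nat.find h - 1 := by
    apply Nat.find_le
    rw [← Function.iterate_succ_apply, Nat.succ_eq_add_one, Nat.sub_add_cancel hpos]
    exact hfind
  have hge : Nat.find h ≤ Nat.find h2 + 1 := by
    apply Nat.find_le
    rw [Function.iterate_succ_apply]
    exact Nat.find_spec h2
  omega

lemma leaves_nonempty (hf : GoodOn s r f) (hs : s.Nonempty) : (leaves s f).Nonempty := by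
  obtain ⟨v, hv, hmax⟩ := Finset.exists_max_image s (rk r f) hs
  refine ⟨v, Finset.mem_filter.mpr ⟨hv, fun u hu hcon => ?_⟩⟩
  have hur : u ≠ r := fun h => hf.1 (h ▸ hu)
  obtain ⟨hex, heq⟩ := rk_succ hur (hf.2.2 u hu)
  rw [hcon] at heq
  have := hmax u hu
  omega

lemma no_two_cycle (hf : GoodOn s r f) {u v : V} (hu : u ∈ s) (hv : v ∈ s)
    (huv : f u = v) (hvu : f v = u) : False := by
  have hur : u ≠ r := fun h => hf.1 (h ▸ hu)
  have hvr : v ≠ r := fun h => hf.1 (h ▸ hv)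
  have halt : ∀ k, f^[k] u = u ∨ f^[k] u = v := by
    intro k
    induction k with
    | zero => exact Or.inl rfl
    | succ k ih =>
      rcases ih with h | h <;> rw [Function.iterate_succ_apply', h]
      · exact Or.inr huv
      · exact Or.inl hvu
  obtain ⟨k, hk⟩ := hf.2.2 u hu
  rcases halt k with h | h <;> rw [hk] at h
  · exact hur h.symm
  · exact hvr h.symm

lemma GoodOn.erase_update (hf : GoodOn s r f) {ℓ : V} (hℓ : ℓ ∈ leaves s f) :
    GoodOn (s.erase ℓ) r (Function.update f ℓ ℓ) := by
  have hℓs : ℓ ∈ s := (Finset.mem_filter.mp hℓ).1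
  refine ⟨fun h => hf.1 (Finset.mem_of_mem_erase h), ?_, ?_⟩
  · intro v hv
    by_cases hvℓ : v = ℓ
    · subst hvℓ; exact Function.update_self _ _ _
    · rw [Function.update_of_ne hvℓ]
      exact hf.2.1 v (fun h => hv (Finset.mem_erase.mpr ⟨hvℓ, h⟩))
  · intro v hv
    obtain ⟨k, hk⟩ := hf.2.2 v (Finset.mem_of_mem_erase hv)
    refine ⟨k, ?_⟩
    rw [iterate_congr (hf.iterate_ne_leaf (Finset.mem_of_mem_erase hv)
      (Finset.ne_of_mem_erase hv) hℓ)]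
    exact hk

lemma max_unbot'_mem {t : Finset V} (ht : t.Nonempty) : (WithBot.unbotD r (t.max)) ∈ t := by
  obtain ⟨m, hm⟩ := Finset.max_of_nonempty ht
  rw [hm]
  exact Finset.mem_of_max hm

lemma enc_length (k : ℕ) : ∀ (s : Finset V) (f : V → V), GoodOn s r f → s.card ≤ k →
    (enc r k s f).length = s.card - 1 := by
  induction k with
  | zero => intro s f _ h; simp only [enc, List.length_nil]; omega
  | succ k ih =>
    intro s f hf hk
    rw [enc]
    by_cases h1 : s.card ≤ 1
    · simp only [h1, if_true, List.length_nil]; omega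
    · simp only [h1, if_false, List.length_cons]
      set ℓ := (WithBot.unbotD r ((leaves s f).max)) with hℓdef
      have hℓ : ℓ ∈ leaves s f :=
        max_unbot'_mem (leaves_nonempty hf (Finset.card_pos.mp (by omega)))
      have hℓs : ℓ ∈ s := (Finset.mem_filter.mp hℓ).1
      rw [ih _ _ (hf.erase_update hℓ) (by rw [Finset.card_erase_of_mem hℓs]; omega),
        Finset.card_erase_of_mem hℓs]
      omega


lemma enc_mem (k : ℕ) : ∀ (s : Finset V) (f : V → V), GoodOn s r f → s.card ≤ k →
    ∀ x ∈ enc r k s f, x ∈ s ∨ x = r := by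
  induction k with
  | zero => intro s f _ _ x hx; simp [enc] at hx
  | succ k ih =>
    intro s f hf hk x hx
    rw [enc] at hx
    by_cases h1 : s.card ≤ 1
    · simp [h1] at hx
    · simp only [h1, if_false, List.mem_cons] at hx
      set ℓ := (WithBot.unbotD r ((leaves s f).max)) with hℓdef
      have hℓ : ℓ ∈ leaves s f :=
        max_unbot'_mem (leaves_nonempty hf (Finset.card_pos.mp (by omega)))
      have hℓs : ℓ ∈ s := (Finset.mem_filter.mp hℓ).1
      rcases hx with rfl | hx
      · exact hf.escape hℓs
      · rcases ih _ _ (hf.erase_update hℓ)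
          (by rw [Finset.card_erase_of_mem hℓs]; omega) x hx with h | h
        · exact Or.inl (Finset.mem_of_mem_erase h)
        · exact Or.inr h

lemma enc_mem_iff (k : ℕ) : ∀ (s : Finset V) (f : V → V), GoodOn s r f → s.card ≤ k →
    ∀ v ∈ s, (v ∈ enc r k s f ↔ ∃ u ∈ s, f u = v) := by
  induction k with
  | zero =>
    intro s f hf hk v hv
    rw [Nat.le_zero, Finset.card_eq_zero] at hk
    subst hk; simp at hv
  | succ k ih =>
    intro s f hf hk v hv
    rw [enc]
    by_cases h1 : s.card ≤ 1
    · simp only [h1, if_true, List.not_mem_nil, false_iff]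
      rintro ⟨u, hu, huv⟩
      have hc1 : s.card = 1 := by
        have := Finset.card_pos.mpr ⟨v, hv⟩; omega
      obtain ⟨w, rfl⟩ := Finset.card_eq_one.mp hc1
      have h3 : u = v := by
        rw [Finset.mem_singleton] at hu hv; rw [hu, hv]
      exact hf.ne_self hu (huv.trans h3.symm)
    · simp only [h1, if_false, List.mem_cons]
      set ℓ := (WithBot.unbotD r ((leaves s f).max)) with hℓdef
      have hℓ : ℓ ∈ leaves s f :=
        max_unbot'_mem (leaves_nonempty hf (Finset.card_pos.mp (by omega)))
      have hℓs : ℓ ∈ s := (Finset.mem_filter.mp hℓ).1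
      have hf' := hf.erase_update hℓ
      have hcard' : (s.erase ℓ).card ≤ k := by rw [Finset.card_erase_of_mem hℓs]; omega
      by_cases hvℓ : v = ℓ
      · subst hvℓ
        constructor
        · rintro (h | h)
          · exact absurd h.symm (hf.ne_self hℓs)
          · rcases enc_mem k _ _ hf' hcard' _ h with h2 | h2
            · exact absurd h2 (Finset.notMem_erase _ _)
            · exact absurd h2 (fun hr => hf.1 (hr ▸ hℓs))
        · rintro ⟨u, hu, huv⟩
          exact absurd huv ((Finset.mem_filter.mp hℓ).2 u hu)
      · constructor
        · rintro (h | h)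
          · exact ⟨ℓ, hℓs, h.symm⟩
          · obtain ⟨u, hu, huv⟩ := (ih _ _ hf' hcard' v (Finset.mem_erase.mpr ⟨hvℓ, hv⟩)).mp h
            refine ⟨u, Finset.mem_of_mem_erase hu, ?_⟩
            rwa [Function.update_of_ne (Finset.ne_of_mem_erase hu)] at huv
        · rintro ⟨u, hu, huv⟩
          by_cases huℓ : u = ℓ
          · subst huℓ; exact Or.inl huv.symm
          · right
            apply (ih _ _ hf' hcard' v (Finset.mem_erase.mpr ⟨hvℓ, hv⟩)).mpr
            exact ⟨u, Finset.mem_erase.mpr ⟨huℓ, hu⟩, by rw [Function.update_of_ne huℓ]; exact huv⟩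

lemma dec_enc (k : ℕ) : ∀ (s : Finset V) (f : V → V), GoodOn s r f → s.card ≤ k →
    dec r k s (enc r k s f) = f := by
  induction k with
  | zero =>
    intro s f hf hk
    rw [Nat.le_zero, Finset.card_eq_zero] at hk
    subst hk
    funext x
    simp only [dec, id_eq]
    exact (hf.2.1 x (Finset.notMem_empty x)).symm
  | succ k ih =>
    intro s f hf hk
    have hcode : enc r (k+1) s f = (if s.card ≤ 1 then [] else
        f ((WithBot.unbotD r ((leaves s f).max))) ::
          enc r k (s.erase ((WithBot.unbotD r ((leaves s f).max))))
            (Function.update f ((WithBot.unbotD r ((leaves s f).max))) ((WithBot.unbotD r ((leaves s f).max))))) := by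
      rw [enc]
    by_cases h1 : s.card ≤ 1
    · rw [hcode, if_pos h1, dec]
      rcases Nat.lt_or_ge s.card 1 with h0 | h0
      · have hs : s = ∅ := by rw [← Finset.card_eq_zero]; omega
        rw [if_pos h1, if_neg (by omega : ¬ s.card = 1)]
        funext x
        exact (hf.2.1 x (by simp [hs])).symm
      · have hc1 : s.card = 1 := by omega
        rw [if_pos h1, if_pos hc1]
        obtain ⟨w, hw⟩ := Finset.card_eq_one.mp hc1
        subst hw
        have hwmax : (WithBot.unbotD r ((({w} : Finset V)).max)) = w := by
          rw [Finset.max_singleton]; rfl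
        rw [hwmax]
        funext x
        by_cases hxw : x = w
        · subst hxw
          rw [Function.update_self]
          rcases hf.escape (Finset.mem_singleton_self x) with h | h
          · rw [Finset.mem_singleton] at h
            exact absurd h (hf.ne_self (Finset.mem_singleton_self x))
          · exact h.symm
        · rw [Function.update_of_ne hxw]
          exact (hf.2.1 x (by simp [hxw])).symm
    · set ℓ := (WithBot.unbotD r ((leaves s f).max)) with hℓdef
      have hℓ : ℓ ∈ leaves s f :=
        max_unbot'_mem (leaves_nonempty hf (Finset.card_pos.mp (by omega)))
      have hℓs : ℓ ∈ s := (Finset.mem_filter.mp hℓ).1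
      have hf' := hf.erase_update hℓ
      have hcard' : (s.erase ℓ).card ≤ k := by rw [Finset.card_erase_of_mem hℓs]; omega
      rw [hcode, if_neg h1, dec, if_neg h1]
      have hset : s \ (f ℓ :: enc r k (s.erase ℓ) (Function.update f ℓ ℓ)).toFinset
          = leaves s f := by
        ext v
        simp only [Finset.mem_sdiff, List.toFinset_cons, Finset.mem_insert, List.mem_toFinset]
        constructor
        · rintro ⟨hvs, hvn⟩
          push_neg at hvn
          refine Finset.mem_filter.mpr ⟨hvs, fun u hu hcon => ?_⟩
          by_cases huℓ : u = ℓ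
          · subst huℓ; exact hvn.1 hcon.symm
          · apply hvn.2
            by_cases hvℓ : v = ℓ
            · have hchild : ∀ u' ∈ s, f u' ≠ ℓ := (Finset.mem_filter.mp hℓ).2
              rw [hvℓ] at hcon
              exact absurd hcon (hchild u hu)
            · apply (enc_mem_iff k _ _ hf' hcard' v (Finset.mem_erase.mpr ⟨hvℓ, hvs⟩)).mpr
              exact ⟨u, Finset.mem_erase.mpr ⟨huℓ, hu⟩, by
                rw [Function.update_of_ne huℓ]; exact hcon⟩
        · intro hv
          have hvs : v ∈ s := (Finset.mem_filter.mp hv).1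
          refine ⟨hvs, ?_⟩
          have hvleaf : ∀ u ∈ s, f u ≠ v := (Finset.mem_filter.mp hv).2
          rintro (h | h)
          · exact hvleaf ℓ hℓs h.symm
          · by_cases hvℓ : v = ℓ
            · rcases enc_mem k _ _ hf' hcard' _ h with h2 | h2
              · exact Finset.notMem_erase _ _ (hvℓ ▸ h2)
              · exact hf.1 (h2 ▸ hvs)
            · obtain ⟨u, hu, huv⟩ :=
                (enc_mem_iff k _ _ hf' hcard' v (Finset.mem_erase.mpr ⟨hvℓ, hvs⟩)).mp h
              rw [Function.update_of_ne (Finset.ne_of_mem_erase hu)] at huv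
              exact hvleaf u (Finset.mem_of_mem_erase hu) huv
      rw [hset, ← hℓdef]
      show Function.update (dec r k (s.erase ℓ) (enc r k (s.erase ℓ)
        (Function.update f ℓ ℓ))) ℓ (f ℓ) = f
      rw [ih _ _ hf' hcard', Function.update_idem]
      exact Function.update_eq_self ℓ f



lemma dec_good (k : ℕ) : ∀ (s : Finset V) (code : List V), r ∉ s →
    code.length + 1 = s.card → (∀ x ∈ code, x ∈ s ∨ x = r) → s.card ≤ k →
    GoodOn s r (dec r k s code) := by
  induction k with
  | zero => intro s code _ hlen _ hk; omega
  | succ k ih =>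
    intro s code hr hlen hmem hk
    by_cases h1 : s.card ≤ 1
    · have hc1 : s.card = 1 := by omega
      obtain ⟨w, rfl⟩ := Finset.card_eq_one.mp hc1
      have hwr : w ≠ r := fun h => hr (h ▸ Finset.mem_singleton_self w)
      have hnil : code = [] := List.eq_nil_of_length_eq_zero (by omega)
      subst hnil
      have hdec : dec r (k+1) ({w} : Finset V) [] = Function.update id w r := by
        rw [dec, if_pos h1, if_pos hc1, Finset.max_singleton]
        rfl
      rw [hdec]
      refine ⟨hr, ?_, ?_⟩
      · intro v hv
        rw [Finset.mem_singleton] at hv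
        rw [Function.update_of_ne hv]; rfl
      · intro v hv
        rw [Finset.mem_singleton] at hv
        subst hv
        exact ⟨1, by rw [Function.iterate_one, Function.update_self]⟩
    · cases code with
      | nil => simp at hlen; omega
      | cons a tail =>
        have hℓne : (s \ (a :: tail).toFinset).Nonempty := by
          rw [Finset.sdiff_nonempty]
          intro hsub
          have h2 := Finset.card_le_card hsub
          have h3 := (a :: tail).toFinset_card_le
          simp only [List.length_cons] at h3 hlen
          omega
        set ℓ := (WithBot.unbotD r ((s \ (a :: tail).toFinset).max)) with hℓdef
        have hℓmem : ℓ ∈ s \ (a :: tail).toFinset := max_unbot'_mem hℓne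
        have hℓs : ℓ ∈ s := (Finset.mem_sdiff.mp hℓmem).1
        have hℓnc : ℓ ∉ (a :: tail) := by
          have := (Finset.mem_sdiff.mp hℓmem).2
          rwa [List.mem_toFinset] at this
        have hdec : dec r (k+1) s (a :: tail) =
            Function.update (dec r k (s.erase ℓ) tail) ℓ a := by
          rw [dec, if_neg h1]
        have hf' : GoodOn (s.erase ℓ) r (dec r k (s.erase ℓ) tail) := by
          apply ih
          · exact fun h => hr (Finset.mem_of_mem_erase h)
          · rw [Finset.card_erase_of_mem hℓs]
            simp only [List.length_cons] at hlen
            omega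
          · intro x hx
            rcases hmem x (List.mem_cons_of_mem a hx) with h | h
            · left
              refine Finset.mem_erase.mpr ⟨fun hxl => ?_, h⟩
              exact hℓnc (hxl ▸ List.mem_cons_of_mem a hx)
            · exact Or.inr h
          · rw [Finset.card_erase_of_mem hℓs]; omega
        set f' := dec r k (s.erase ℓ) tail with hf'def
        have haux : ∀ u ∈ s.erase ℓ, ∃ m, (Function.update f' ℓ a)^[m] u = r := by
          intro u hu
          obtain ⟨m, hm⟩ := hf'.2.2 u hu
          refine ⟨m, ?_⟩
          rw [iterate_congr]
          · exact hm
          · intro j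
            rcases hf'.iterate_mem hu j with h | h
            · exact fun hc => (Finset.notMem_erase ℓ s) (hc ▸ h)
            · rw [h]; exact fun hc => hr (hc ▸ hℓs)
        rw [hdec]
        refine ⟨hr, ?_, ?_⟩
        · intro v hv
          have hvℓ : v ≠ ℓ := fun h => hv (h ▸ hℓs)
          rw [Function.update_of_ne hvℓ]
          exact hf'.2.1 v (fun h => hv (Finset.mem_of_mem_erase h))
        · intro v hv
          by_cases hvℓ : v = ℓ
          · rw [hvℓ]
            rcases hmem a (List.mem_cons_self) with ha | ha
            · have haℓ : a ≠ ℓ := fun h => hℓnc (h ▸ List.mem_cons_self)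
              obtain ⟨m, hm⟩ := haux a (Finset.mem_erase.mpr ⟨haℓ, ha⟩)
              refine ⟨m + 1, ?_⟩
              rw [Function.iterate_succ_apply, Function.update_self]
              exact hm
            · exact ⟨1, by rw [Function.iterate_one, Function.update_self]; exact ha⟩
          · exact haux v (Finset.mem_erase.mpr ⟨hvℓ, hv⟩)

lemma enc_dec (k : ℕ) : ∀ (s : Finset V) (code : List V), r ∉ s →
    code.length + 1 = s.card → (∀ x ∈ code, x ∈ s ∨ x = r) → s.card ≤ k →
    enc r k s (dec r k s code) = code := by
  induction k with
  | zero => intro s code _ hlen _ hk; omega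
  | succ k ih =>
    intro s code hr hlen hmem hk
    by_cases h1 : s.card ≤ 1
    · have hc1 : s.card = 1 := by omega
      rw [enc, if_pos h1]
      cases code with
      | nil => rfl
      | cons a tail => simp at hlen; omega
    · cases code with
      | nil => simp at hlen; omega
      | cons a tail =>
        have hℓne : (s \ (a :: tail).toFinset).Nonempty := by
          rw [Finset.sdiff_nonempty]
          intro hsub
          have h2 := Finset.card_le_card hsub
          have h3 := (a :: tail).toFinset_card_le
          simp only [List.length_cons] at h3 hlen
          omega
        set ℓ := (WithBot.unbotD r ((s \ (a :: tail).toFinset).max)) with hℓdef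
        have hℓmem : ℓ ∈ s \ (a :: tail).toFinset := max_unbot'_mem hℓne
        have hℓs : ℓ ∈ s := (Finset.mem_sdiff.mp hℓmem).1
        have hℓnc : ℓ ∉ (a :: tail) := by
          have := (Finset.mem_sdiff.mp hℓmem).2
          rwa [List.mem_toFinset] at this
        have hdec : dec r (k+1) s (a :: tail) =
            Function.update (dec r k (s.erase ℓ) tail) ℓ a := by
          rw [dec, if_neg h1]
        set f' := dec r k (s.erase ℓ) tail with hf'def
        have hrer : r ∉ s.erase ℓ := fun h => hr (Finset.mem_of_mem_erase h)
        have hlen' : tail.length + 1 = (s.erase ℓ).card := by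
          rw [Finset.card_erase_of_mem hℓs]
          simp only [List.length_cons] at hlen
          omega
        have hmem' : ∀ x ∈ tail, x ∈ s.erase ℓ ∨ x = r := by
          intro x hx
          rcases hmem x (List.mem_cons_of_mem a hx) with h | h
          · left
            refine Finset.mem_erase.mpr ⟨fun hxl => ?_, h⟩
            exact hℓnc (hxl ▸ List.mem_cons_of_mem a hx)
          · exact Or.inr h
        have hcard' : (s.erase ℓ).card ≤ k := by rw [Finset.card_erase_of_mem hℓs]; omega
        have hf' : GoodOn (s.erase ℓ) r f' := dec_good k _ _ hrer hlen' hmem' hcard'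
        have hih : enc r k (s.erase ℓ) f' = tail := ih _ _ hrer hlen' hmem' hcard'
        set f := Function.update f' ℓ a with hfdef
        have hgood : GoodOn s r f := by
          rw [← hdec]
          exact dec_good (k+1) _ _ hr hlen hmem hk
        -- leaves s f = s \ code.toFinset
        have hset : leaves s f = s \ (a :: tail).toFinset := by
          ext v
          rw [Finset.mem_sdiff, List.mem_toFinset]
          constructor
          · intro hv
            have hvs : v ∈ s := (Finset.mem_filter.mp hv).1
            have hvleaf : ∀ u ∈ s, f u ≠ v := (Finset.mem_filter.mp hv).2
            refine ⟨hvs, fun hvc => ?_⟩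
            rcases List.mem_cons.mp hvc with rfl | hvt
            · exact hvleaf ℓ hℓs (by rw [hfdef, Function.update_self])
            · -- v ∈ tail: v has f'-child
              have hvℓ : v ≠ ℓ := fun h => hℓnc (h ▸ hvc)
              have hver : v ∈ s.erase ℓ := Finset.mem_erase.mpr ⟨hvℓ, hvs⟩
              rw [← hih] at hvt
              obtain ⟨u, hu, huv⟩ := (enc_mem_iff k _ _ hf' hcard' v hver).mp hvt
              apply hvleaf u (Finset.mem_of_mem_erase hu)
              rw [hfdef, Function.update_of_ne (Finset.ne_of_mem_erase hu)]
              exact huv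
          · rintro ⟨hvs, hvnc⟩
            refine Finset.mem_filter.mpr ⟨hvs, fun u hu hcon => ?_⟩
            by_cases huℓ : u = ℓ
            · subst huℓ
              rw [hfdef, Function.update_self] at hcon
              exact hvnc (hcon ▸ List.mem_cons_self)
            · have huer : u ∈ s.erase ℓ := Finset.mem_erase.mpr ⟨huℓ, hu⟩
              rw [hfdef, Function.update_of_ne huℓ] at hcon
              -- f' u = v, so v ∈ erase (escape) and v ∈ tail
              have hvler : v ∈ s.erase ℓ := by
                rcases hf'.escape huer with h | h
                · rwa [hcon] at h
                · rw [hcon] at h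
                  exact absurd (h ▸ hvs) hr
              apply hvnc
              apply List.mem_cons_of_mem
              rw [← hih]
              exact (enc_mem_iff k _ _ hf' hcard' v hvler).mpr ⟨u, huer, hcon⟩
        have hencf : enc r (k+1) s f = f ℓ :: enc r k (s.erase ℓ) (Function.update f ℓ ℓ) := by
          rw [enc, if_neg h1, hset, ← hℓdef]
        rw [hdec, hencf]
        have h5 : Function.update f ℓ ℓ = f' := by
          rw [hfdef, Function.update_idem]
          have : f' ℓ = ℓ := hf'.2.1 ℓ (Finset.notMem_erase ℓ s)
          nth_rewrite 2 [← this]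
          exact Function.update_eq_self ℓ f'
        rw [h5, hih, hfdef, Function.update_self]


end Prufer

section TreeFun
variable {n : ℕ} [NeZero n]

def goodF (f : Fin n → Fin n) : Prop := f 0 = 0 ∧ ∀ v, ∃ k, f^[k] v = 0

lemma goodF_iff_goodOn (f : Fin n → Fin n) :
    goodF f ↔ GoodOn ((Finset.univ : Finset (Fin n)) \ {0}) 0 f := by
  constructor
  · rintro ⟨h0, hconv⟩
    refine ⟨by simp, fun v hv => ?_, fun v _ => hconv v⟩
    simp only [Finset.mem_sdiff, Finset.mem_univ, true_and, Finset.mem_singleton, not_not] at hv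
    rw [hv, h0]
  · rintro ⟨_, hid, hconv⟩
    refine ⟨hid 0 (by simp), fun v => ?_⟩
    by_cases hv : v = 0
    · exact ⟨0, hv⟩
    · exact hconv v (by simp [hv])

variable {f : Fin n → Fin n}

lemma goodF.ne_self (hf : goodF f) {v : Fin n} (hv : v ≠ 0) : f v ≠ v := by
  intro hcon
  obtain ⟨k, hk⟩ := hf.2 v
  rw [iterate_frozen f v hcon k] at hk
  exact hv hk

lemma goodF.no_periodic (hf : goodF f) {v : Fin n} (hv : v ≠ 0) {j : ℕ} (hj : 1 ≤ j) :
    f^[j] v ≠ v := by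
  intro hcon
  obtain ⟨k, hk⟩ := hf.2 v
  have h1 : f^[j*k] v = v := by
    rw [Function.iterate_mul]
    exact iterate_frozen _ v hcon k
  have h2 : f^[j*k] v = 0 := by
    have hjk : j * k = k + (j*k - k) := by
      have : k ≤ j * k := Nat.le_mul_of_pos_left k hj
      omega
    rw [hjk, add_comm, Function.iterate_add_apply, hk]
    exact iterate_frozen f 0 hf.1 _
  exact hv (h1 ▸ h2)

def graphOf (f : Fin n → Fin n) : SimpleGraph (Fin n) :=
  SimpleGraph.fromEdgeSet ((fun v => s(v, f v)) '' {v : Fin n | v ≠ 0})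

lemma graphOf_adj (hf : goodF f) {v : Fin n} (hv : v ≠ 0) : (graphOf f).Adj v (f v) := by
  rw [graphOf, SimpleGraph.fromEdgeSet_adj]
  exact ⟨⟨v, hv, rfl⟩, fun h => hf.ne_self hv h.symm⟩

lemma graphOf_edgeSet (hf : goodF f) :
    (graphOf f).edgeSet = (fun v => s(v, f v)) '' {v : Fin n | v ≠ 0} := by
  rw [graphOf, SimpleGraph.edgeSet_fromEdgeSet]
  ext e
  simp only [Set.mem_diff, Set.mem_setOf_eq, and_iff_left_iff_imp]
  rintro ⟨v, hv, rfl⟩ hdiag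
  simp only [Sym2.mk_isDiag_iff] at hdiag
  exact hf.ne_self hv hdiag.symm

lemma graphOf_ncard (hf : goodF f) : (graphOf f).edgeSet.ncard = n - 1 := by
  rw [graphOf_edgeSet hf]
  have hinj : Set.InjOn (fun v => s(v, f v)) {v : Fin n | v ≠ 0} := by
    intro u hu v hv h
    simp only [Set.mem_setOf_eq] at hu hv
    rw [Sym2.eq_iff] at h
    rcases h with ⟨h1, _⟩ | ⟨h1, h2⟩
    · exact h1
    · exfalso
      have hgo := (goodF_iff_goodOn f).mp hf
      exact no_two_cycle hgo (by simp [hu]) (by simp [hv]) h2 h1.symm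
  rw [Set.ncard_image_of_injOn hinj]
  have : {v : Fin n | v ≠ 0} = ({0} : Set (Fin n))ᶜ := by ext; simp
  rw [this, Set.ncard_eq_toFinset_card', Set.toFinset_compl, Set.toFinset_singleton,
    Finset.card_compl, Finset.card_singleton, Fintype.card_fin]

lemma graphOf_reach (hf : goodF f) : ∀ (k : ℕ) (v : Fin n), f^[k] v = 0 →
    (graphOf f).Reachable v 0 := by
  intro k
  induction k with
  | zero => intro v h; rw [Function.iterate_zero_apply] at h; exact h ▸ SimpleGraph.Reachable.refl _
  | succ k ih =>
    intro v h
    by_cases hv : v = 0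
    · exact hv ▸ SimpleGraph.Reachable.refl _
    · refine ((graphOf_adj hf hv).reachable).trans (ih (f v) ?_)
      rwa [← Function.iterate_succ_apply]

lemma graphOf_connected (hf : goodF f) : (graphOf f).Connected := by
  rw [SimpleGraph.connected_iff]
  refine ⟨fun a b => ?_, ⟨0⟩⟩
  obtain ⟨ka, hka⟩ := hf.2 a
  obtain ⟨kb, hkb⟩ := hf.2 b
  exact (graphOf_reach hf ka a hka).trans (graphOf_reach hf kb b hkb).symm

lemma graphOf_isTree (hf : goodF f) : (graphOf f).IsTree := by
  have hconn := graphOf_connected hf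
  refine ⟨hconn, acyclic_of_count _ ?_⟩
  rw [graphOf_ncard hf, (connected_iff_nc _).mp hconn, Fintype.card_fin]
  have : 1 ≤ n := Nat.pos_of_ne_zero (NeZero.ne n)
  omega

def parent (g : SimpleGraph (Fin n)) (v : Fin n) : Fin n :=
  if h : g.Connected ∧ v ≠ 0 then
    ((Classical.choice (h.1.preconnected v 0)).toPath : g.Path v 0).1.getVert 1
  else 0

lemma parent_spec {g : SimpleGraph (Fin n)} (hg : g.IsTree) {v : Fin n} (hv : v ≠ 0) :
    parent g v = ((hg.existsUnique_path v 0).choose).getVert 1 := by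
  rw [parent, dif_pos (⟨hg.1, hv⟩ : g.Connected ∧ v ≠ 0)]
  congr 1
  exact (hg.existsUnique_path v 0).choose_spec.2 _
    ((Classical.choice ((hg.1).preconnected v 0)).toPath).2

lemma parent_zero (g : SimpleGraph (Fin n)) : parent g 0 = 0 := by
  rw [parent, dif_neg]
  simp

lemma parent_adj {g : SimpleGraph (Fin n)} (hg : g.IsTree) {v : Fin n} (hv : v ≠ 0) :
    g.Adj v (parent g v) := by
  rw [parent_spec hg hv]
  set p := (hg.existsUnique_path v 0).choose with hp
  have hlen : 0 < p.length := by
    rcases Nat.eq_zero_or_pos p.length with h | h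
    · exact absurd (SimpleGraph.Walk.eq_of_length_eq_zero h) hv
    · exact h
  have := p.adj_getVert_succ hlen
  rwa [SimpleGraph.Walk.getVert_zero] at this

lemma parent_path_step {g : SimpleGraph (Fin n)} (hg : g.IsTree) {v : Fin n} (hv : v ≠ 0) :
    ∃ q : g.Walk (parent g v) 0, q.IsPath ∧
      q.length + 1 = ((hg.existsUnique_path v 0).choose).length := by
  have hp := (hg.existsUnique_path v 0).choose_spec.1
  set p := (hg.existsUnique_path v 0).choose with hpdef
  obtain ⟨u, hadj, q, hpq⟩ := SimpleGraph.Walk.exists_eq_cons_of_ne hv p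
  have hparent : parent g v = u := by
    rw [parent_spec hg hv, ← hpdef, hpq, SimpleGraph.Walk.getVert_cons_succ,
      SimpleGraph.Walk.getVert_zero]
  refine ⟨q.copy hparent.symm rfl, ?_, ?_⟩
  · rw [SimpleGraph.Walk.isPath_copy]
    rw [hpq] at hp
    exact hp.of_cons
  · rw [SimpleGraph.Walk.length_copy, hpq, SimpleGraph.Walk.length_cons]

lemma parent_choose_length {g : SimpleGraph (Fin n)} (hg : g.IsTree) {v : Fin n} (hv : v ≠ 0) :
    ((hg.existsUnique_path (parent g v) 0).choose).length + 1
      = ((hg.existsUnique_path v 0).choose).length := by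
  obtain ⟨q, hq, hlen⟩ := parent_path_step hg hv
  have := (hg.existsUnique_path (parent g v) 0).choose_spec.2 q hq
  rw [← this]
  exact hlen

lemma parent_goodF {g : SimpleGraph (Fin n)} (hg : g.IsTree) : goodF (parent g) := by
  constructor
  · exact parent_zero g
  · have key : ∀ m : ℕ, ∀ v : Fin n, ((hg.existsUnique_path v 0).choose).length = m →
        ∃ k, (parent g)^[k] v = 0 := by
      intro m
      induction m using Nat.strong_induction_on with
      | _ m ih =>
        intro v hm
        by_cases hv : v = 0
        · exact ⟨0, hv⟩
        · have hlen := parent_choose_length hg hv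
          obtain ⟨k, hk⟩ := ih (m - 1) (by omega) (parent g v) (by omega)
          exact ⟨k+1, by rw [Function.iterate_succ_apply, hk]⟩
    exact fun v => key _ v rfl

lemma graphOf_parent {g : SimpleGraph (Fin n)} (hg : g.IsTree) :
    graphOf (parent g) = g := by
  have hgoodp := parent_goodF hg
  apply SimpleGraph.edgeSet_inj.mp
  apply Set.eq_of_subset_of_ncard_le
  · rw [graphOf_edgeSet hgoodp]
    rintro e ⟨v, hv, rfl⟩
    exact (g.mem_edgeSet).mpr (parent_adj hg hv)
  · rw [graphOf_ncard hgoodp]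
    have h1 : g.edgeSet.ncard + 1 = n := by
      have := acyclic_count g hg.2
      rwa [(connected_iff_nc g).mp hg.1, Fintype.card_fin] at this
    omega
  · exact Set.toFinite _

def walkTo (f : Fin n → Fin n) (hf : goodF f) :
    (k : ℕ) → (v : Fin n) → f^[k] v = 0 → (graphOf f).Walk v 0
  | 0, v, h => (SimpleGraph.Walk.nil' v).copy rfl (by rwa [Function.iterate_zero_apply] at h)
  | (k+1), v, h =>
    if hv : v = 0 then (SimpleGraph.Walk.nil' v).copy rfl hv
    else SimpleGraph.Walk.cons (graphOf_adj hf hv)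
      (walkTo f hf k (f v) (by rwa [← Function.iterate_succ_apply]))

lemma walkTo_support (f : Fin n → Fin n) (hf : goodF f) :
    ∀ (k : ℕ) (v : Fin n) (h : f^[k] v = 0),
      ∀ u ∈ (walkTo f hf k v h).support, ∃ j, f^[j] v = u := by
  intro k
  induction k with
  | zero =>
    intro v h u hu
    rw [walkTo] at hu
    simp only [SimpleGraph.Walk.support_copy, SimpleGraph.Walk.support_nil,
      List.mem_singleton] at hu
    exact ⟨0, hu.symm⟩
  | succ k ih =>
    intro v h u hu
    rw [walkTo] at hu
    by_cases hv : v = 0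
    · rw [dif_pos hv] at hu
      simp only [SimpleGraph.Walk.support_copy, SimpleGraph.Walk.support_nil,
        List.mem_singleton] at hu
      exact ⟨0, hu.symm⟩
    · rw [dif_neg hv] at hu
      rw [SimpleGraph.Walk.support_cons, List.mem_cons] at hu
      rcases hu with rfl | hu
      · exact ⟨0, rfl⟩
      · obtain ⟨j, hj⟩ := ih (f v) _ u hu
        exact ⟨j+1, by rwa [Function.iterate_succ_apply]⟩

lemma walkTo_isPath (f : Fin n → Fin n) (hf : goodF f) :
    ∀ (k : ℕ) (v : Fin n) (h : f^[k] v = 0), (walkTo f hf k v h).IsPath := by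
  intro k
  induction k with
  | zero =>
    intro v h
    rw [walkTo, SimpleGraph.Walk.isPath_copy]
    exact SimpleGraph.Walk.IsPath.nil
  | succ k ih =>
    intro v h
    rw [walkTo]
    by_cases hv : v = 0
    · rw [dif_pos hv, SimpleGraph.Walk.isPath_copy]
      exact SimpleGraph.Walk.IsPath.nil
    · rw [dif_neg hv, SimpleGraph.Walk.cons_isPath_iff]
      refine ⟨ih _ _, fun hc => ?_⟩
      obtain ⟨j, hj⟩ := walkTo_support f hf k (f v) _ v hc
      rw [← Function.iterate_succ_apply] at hj
      exact hf.no_periodic hv (by omega) hj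

lemma walkTo_getVert_one (f : Fin n → Fin n) (hf : goodF f) (k : ℕ) (v : Fin n)
    (h : f^[k+1] v = 0) (hv : v ≠ 0) :
    (walkTo f hf (k+1) v h).getVert 1 = f v := by
  rw [walkTo, dif_neg hv, SimpleGraph.Walk.getVert_cons_succ, SimpleGraph.Walk.getVert_zero]

lemma parent_graphOf (f : Fin n → Fin n) (hf : goodF f) (hg : (graphOf f).IsTree) :
    parent (graphOf f) = f := by
  funext v
  by_cases hv : v = 0
  · rw [hv, hf.1, parent_zero]
  · obtain ⟨k, hk⟩ := hf.2 v
    cases k with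
    | zero => exact absurd hk hv
    | succ k =>
      have hW := walkTo_isPath f hf (k+1) v hk
      have huniq := (hg.existsUnique_path v 0).choose_spec.2 _ hW
      rw [parent_spec hg hv, ← huniq, walkTo_getVert_one f hf k v hk hv]

lemma card_trees_eq_card_goodF :
    Nat.card {g : SimpleGraph (Fin n) // g.IsTree} = Nat.card {f : Fin n → Fin n // goodF f} := by
  symm
  apply Nat.card_eq_of_bijective (fun f => (⟨graphOf f.1, graphOf_isTree f.2⟩ :
    {g : SimpleGraph (Fin n) // g.IsTree}))
  constructor
  · rintro ⟨f, hf⟩ ⟨f', hf'⟩ h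
    simp only [Subtype.mk.injEq] at h ⊢
    have h1 := parent_graphOf f hf (graphOf_isTree hf)
    have h2 := parent_graphOf f' hf' (graphOf_isTree hf')
    rw [h] at h1
    exact h1.symm.trans h2
  · rintro ⟨g, hg⟩
    refine ⟨⟨parent g, parent_goodF hg⟩, ?_⟩
    simp only [Subtype.mk.injEq]
    exact graphOf_parent hg

end TreeFun


section Cayley
variable {n : ℕ} [NeZero n]

lemma card_goodF : Nat.card {f : Fin n → Fin n // goodF f} = n ^ (n - 2) := by
  have hn : 1 ≤ n := Nat.pos_of_ne_zero (NeZero.ne n)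
  rcases Nat.lt_or_ge n 2 with h2 | h2
  · have hn1 : n = 1 := by omega
    subst hn1
    rw [show (1:ℕ)^(1-2) = 1 from one_pow _, Nat.card_eq_one_iff_unique]
    refine ⟨?_, ⟨⟨id, rfl, fun v => ⟨0, Subsingleton.elim _ _⟩⟩⟩⟩
    constructor
    rintro ⟨f, _⟩ ⟨f', _⟩
    exact Subtype.ext (Subsingleton.elim _ _)
  · set s : Finset (Fin n) := Finset.univ \ {0} with hsdef
    have hr : (0 : Fin n) ∉ s := by simp [hsdef]
    have hcard : s.card = n - 1 := by
      rw [hsdef, Finset.card_sdiff_of_subset (by simp), Finset.card_univ, Fintype.card_fin,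
        Finset.card_singleton]
    have hgood : ∀ f : Fin n → Fin n, goodF f ↔ GoodOn s 0 f := fun f => goodF_iff_goodOn f
    have hE : ∀ f : Fin n → Fin n, goodF f → (enc 0 (n-1) s f).length = n - 2 := by
      intro f hf
      rw [enc_length (n-1) s f ((hgood f).mp hf) (by omega), hcard]
      omega
    have hDlen : ∀ l : List (Fin n), l.length = n - 2 → l.length + 1 = s.card := by
      intro l hl; omega
    have hDmem : ∀ l : List (Fin n), ∀ x ∈ l, x ∈ s ∨ x = (0 : Fin n) := by
      intro l x _
      by_cases hx : x = 0
      · exact Or.inr hx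
      · exact Or.inl (by simp [hsdef, hx])
    have hbij : Function.Bijective (fun fp : {f : Fin n → Fin n // goodF f} =>
        (⟨enc 0 (n-1) s fp.1, hE fp.1 fp.2⟩ : {l : List (Fin n) // l.length = n - 2})) := by
      rw [Function.bijective_iff_has_inverse]
      refine ⟨fun l => ⟨dec 0 (n-1) s l.1, (hgood _).mpr
        (dec_good (n-1) s l.1 hr (hDlen l.1 l.2) (hDmem l.1) (by omega))⟩, ?_, ?_⟩
      · rintro ⟨f, hf⟩
        exact Subtype.ext (dec_enc (n-1) s f ((hgood f).mp hf) (by omega))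
      · rintro ⟨l, hl⟩
        exact Subtype.ext (enc_dec (n-1) s l hr (hDlen l hl) (hDmem l) (by omega))
    rw [Nat.card_eq_of_bijective _ hbij]
    show Nat.card (List.Vector (Fin n) (n - 2)) = n ^ (n - 2)
    rw [Nat.card_eq_fintype_card, card_vector, Fintype.card_fin]

lemma card_trees : Nat.card {g : SimpleGraph (Fin n) // g.IsTree} = n ^ (n - 2) := by
  rw [card_trees_eq_card_goodF, card_goodF]

end Cayley

end PfAux



theorem probEvent_smallP (n s : ℕ) (hs : s ≤ n) :
    ((fun p : ℝ => probEvent n p (fun g => numComp g = s) -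
        (forestCount s n : ℝ) * p ^ (n - s)) =O[𝓝[>] (0 : ℝ)]
      fun p : ℝ => p ^ (n - s + 1)) ∧
    ((fun p : ℝ => connProb n p - (n : ℝ) ^ (n - 2) * p ^ (n - 1)) =O[𝓝[>] (0 : ℝ)]
      fun p : ℝ => p ^ n) := by
  constructor
  · have hk : ∀ g : SimpleGraph (Fin n), numComp g = s → n - s ≤ g.edgeSet.ncard := by
      intro g hg
      have h := PfAux.card_le g
      have hnc : PfAux.nc g = numComp g := rfl
      rw [Fintype.card_fin, hnc, hg] at h
      omega
    have hcount : forestCount s n =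
        Nat.card {g : SimpleGraph (Fin n) // numComp g = s ∧ g.edgeSet.ncard = n - s} := by
      rw [forestCount]
      apply Nat.card_congr
      apply Equiv.subtypeEquivRight
      intro g
      have hnc : PfAux.nc g = numComp g := rfl
      constructor
      · rintro ⟨hac, hcomp⟩
        refine ⟨hcomp, ?_⟩
        have h := PfAux.acyclic_count g hac
        rw [Fintype.card_fin, hnc, hcomp] at h
        omega
      · rintro ⟨hcomp, he⟩
        refine ⟨PfAux.acyclic_of_count g ?_, hcomp⟩
        rw [Fintype.card_fin, hnc, hcomp, he]
        omega
    exact keyAnalysis n (n - s) _ hk _ hcount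
  · rcases Nat.eq_zero_or_pos n with rfl | hn
    · have hconn : connProb 0 = fun _ : ℝ => (0 : ℝ) := by
        funext p
        rw [connProb, probEvent]
        apply Finset.sum_eq_zero
        intro g _
        rw [if_neg]
        intro hcon
        exact (IsEmpty.false (hcon.nonempty.some))
      rw [hconn]
      have h1 : (fun _ : ℝ => (-1 : ℝ)) =O[𝓝[>] (0:ℝ)] fun _ : ℝ => (1:ℝ) :=
        Asymptotics.isBigO_const_const _ one_ne_zero _
      simpa using h1
    · haveI : NeZero n := ⟨hn.ne'⟩
      haveI : Nonempty (Fin n) := ⟨0⟩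
      have hk : ∀ g : SimpleGraph (Fin n), g.Connected → n - 1 ≤ g.edgeSet.ncard := by
        intro g hg
        have h := PfAux.card_le g
        rw [Fintype.card_fin, (PfAux.connected_iff_nc g).mp hg] at h
        omega
      have hcount : n ^ (n-2) =
          Nat.card {g : SimpleGraph (Fin n) // g.Connected ∧ g.edgeSet.ncard = n - 1} := by
        rw [← PfAux.card_trees]
        apply Nat.card_congr
        apply Equiv.subtypeEquivRight
        intro g
        constructor
        · rintro ⟨hconn, hac⟩
          refine ⟨hconn, ?_⟩
          have h := PfAux.acyclic_count g hac
          rw [Fintype.card_fin, (PfAux.connected_iff_nc g).mp hconn] at h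
          omega
        · rintro ⟨hconn, he⟩
          refine ⟨hconn, PfAux.acyclic_of_count g ?_⟩
          rw [Fintype.card_fin, (PfAux.connected_iff_nc g).mp hconn, he]
          omega
      have hmain := keyAnalysis n (n-1) (fun g => g.Connected) hk _ hcount
      have hexp : n - 1 + 1 = n := by omega
      rw [hexp] at hmain
      have hcast : ((n ^ (n-2) : ℕ) : ℝ) = (n : ℝ) ^ (n - 2) := by push_cast; ring
      rw [← hcast]
      exact hmain
end
end

section
/- For all n ≥ 1, π_{n+1} ≥ n q^n p_n, where π_{n+1} is the probability that G(n+1,p) has an isolated vertex, p_n is the probability that G(n,p) is connected, and q = 1-p. -/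
open Classical Finset

noncomputable section

/-! ### Auxiliary machinery -/

/-- An embedding of `Fin n` into `Fin (n+1)` whose range misses exactly `v`. -/
def fv (n : ℕ) (v : Fin (n + 1)) : Fin n ↪ Fin (n + 1) :=
  ⟨fun i => Equiv.swap v (Fin.last n) (Fin.castSucc i),
   fun _ _ h => Fin.castSucc_injective n ((Equiv.swap v (Fin.last n)).injective h)⟩

lemma fv_ne (n : ℕ) (v : Fin (n + 1)) (i : Fin n) : fv n v i ≠ v := by
  intro h
  have : Fin.castSucc i = Fin.last n := by
    apply (Equiv.swap v (Fin.last n)).injective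
    rw [Equiv.swap_apply_right]; exact h
  exact (Fin.castSucc_lt_last i).ne this

lemma fv_surj (n : ℕ) (v x : Fin (n + 1)) (hx : x ≠ v) : ∃ i, fv n v i = x := by
  have h1 : Equiv.swap v (Fin.last n) x ≠ Fin.last n := by
    intro h
    apply hx
    apply (Equiv.swap v (Fin.last n)).injective
    rw [Equiv.swap_apply_left]; exact h
  obtain ⟨i, hi⟩ := Fin.exists_castSucc_eq.mpr h1
  exact ⟨i, by show Equiv.swap v (Fin.last n) (Fin.castSucc i) = x; rw [hi, Equiv.swap_apply_self]⟩

/-- The event: vertex `v` is isolated and the rest of the graph is connected. -/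
def Avg (n : ℕ) (v : Fin (n + 1)) (g : SimpleGraph (Fin (n + 1))) : Prop :=
  (∀ w, ¬ g.Adj v w) ∧ (g.comap (fv n v)).Connected

lemma ncard_edgeSet_map {n m : ℕ} (f : Fin n ↪ Fin m) (h : SimpleGraph (Fin n)) :
    (h.map f).edgeSet.ncard = h.edgeSet.ncard := by
  have : (h.map f).edgeSet = Sym2.map f '' h.edgeSet := by
    ext e
    induction e with
    | _ x y =>
      simp only [SimpleGraph.mem_edgeSet, SimpleGraph.map_adj, Set.mem_image]
      constructor
      · rintro ⟨a, b, hab, ha, hb⟩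
        exact ⟨s(a,b), hab, by simp [ha, hb]⟩
      · rintro ⟨e', he', hmap⟩
        induction e' with
        | _ a b =>
          rw [Sym2.map_pair_eq, Sym2.eq_iff] at hmap
          rcases hmap with ⟨ha, hb⟩ | ⟨ha, hb⟩
          · exact ⟨a, b, he', ha, hb⟩
          · exact ⟨b, a, he'.symm, hb, ha⟩
  rw [this, Set.ncard_image_of_injective _ (Sym2.map.injective f.injective)]

lemma ncard_edgeSet_le {n : ℕ} (h : SimpleGraph (Fin n)) : h.edgeSet.ncard ≤ n.choose 2 := by
  rw [Set.ncard_eq_toFinset_card']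
  have := SimpleGraph.card_edgeFinset_le_card_choose_two (G := h)
  simpa [SimpleGraph.edgeFinset, Fintype.card_fin] using this

lemma graphProb_map {n : ℕ} (p : ℝ) (v : Fin (n + 1)) (h : SimpleGraph (Fin n)) :
    graphProb p (h.map (fv n v)) = (1 - p) ^ n * graphProb p h := by
  unfold graphProb
  rw [ncard_edgeSet_map]
  have hle : h.edgeSet.ncard ≤ n.choose 2 := ncard_edgeSet_le h
  have hch : (n + 1).choose 2 - h.edgeSet.ncard = (n.choose 2 - h.edgeSet.ncard) + n := by
    have h2 : (n + 1).choose 2 = n.choose 2 + n := by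
      rw [Nat.choose_succ_succ, Nat.choose_one_right, Nat.add_comm]
    omega
  rw [hch, pow_add]
  ring

lemma map_comap_of_isolated {n : ℕ} (v : Fin (n + 1)) (g : SimpleGraph (Fin (n + 1)))
    (hiso : ∀ w, ¬ g.Adj v w) : (g.comap (fv n v)).map (fv n v) = g := by
  ext x y
  simp only [SimpleGraph.map_adj, SimpleGraph.comap_adj, Function.Embedding.coeFn_mk]
  constructor
  · rintro ⟨a, b, hab, rfl, rfl⟩
    exact hab
  · intro hxy
    have hx : x ≠ v := fun h => hiso y (h ▸ hxy)
    have hy : y ≠ v := fun h => hiso x (h ▸ hxy.symm)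
    obtain ⟨a, ha⟩ := fv_surj n v x hx
    obtain ⟨b, hb⟩ := fv_surj n v y hy
    exact ⟨a, b, by rw [ha, hb]; exact hxy, ha, hb⟩

/-- Probability of `Avg n v`. -/
lemma sum_Avg {n : ℕ} (p : ℝ) (v : Fin (n + 1)) :
    ∑ g : SimpleGraph (Fin (n + 1)), (if Avg n v g then graphProb p g else 0)
      = (1 - p) ^ n * connProb n p := by
  classical
  set F : SimpleGraph (Fin (n + 1)) → ℝ := fun g => if Avg n v g then graphProb p g else 0
  have key : ∀ g, F g ≠ 0 → g ∈ (univ : Finset (SimpleGraph (Fin n))).image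
      (fun h => h.map (fv n v)) := by
    intro g hF
    have hA : Avg n v g := by by_contra h; exact hF (if_neg h)
    refine mem_image.mpr ⟨g.comap (fv n v), mem_univ _, ?_⟩
    exact map_comap_of_isolated v g hA.1
  have h1 : ∑ g : SimpleGraph (Fin (n + 1)), F g
      = ∑ g ∈ (univ : Finset (SimpleGraph (Fin n))).image (fun h => h.map (fv n v)), F g := by
    symm
    apply Finset.sum_subset (subset_univ _)
    intro g _ hg
    by_contra h
    exact hg (key g h)
  have h2 : ∑ g ∈ (univ : Finset (SimpleGraph (Fin n))).image (fun h => h.map (fv n v)), F g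
      = ∑ h : SimpleGraph (Fin n), F (h.map (fv n v)) := by
    apply Finset.sum_image
    intro a _ b _ hab
    exact SimpleGraph.map_injective (fv n v) hab
  have h3 : ∀ h : SimpleGraph (Fin n),
      F (h.map (fv n v)) = if h.Connected then (1 - p) ^ n * graphProb p h else 0 := by
    intro h
    have hAiff : Avg n v (h.map (fv n v)) ↔ h.Connected := by
      constructor
      · rintro ⟨-, hc⟩
        rwa [SimpleGraph.comap_map_eq] at hc
      · intro hc
        constructor
        · intro w hw
          rw [SimpleGraph.map_adj] at hw
          obtain ⟨a, b, -, ha, -⟩ := hw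
          exact fv_ne n v a ha
        · rwa [SimpleGraph.comap_map_eq]
    simp only [F, hAiff, graphProb_map]
  rw [h1, h2]
  simp_rw [h3]
  rw [connProb, probEvent, Finset.mul_sum]
  apply Finset.sum_congr rfl
  intro h _
  split <;> ring

lemma Avg_disjoint {n : ℕ} (hn : 2 ≤ n) (g : SimpleGraph (Fin (n + 1)))
    (u v : Fin (n + 1)) (hu : Avg n u g) (hv : Avg n v g) : u = v := by
  by_contra hne
  obtain ⟨i, hi⟩ := fv_surj n v u hne
  -- the comap graph at `v` is connected with at least 2 vertices, so `i` has a neighbour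
  have hcard : Nontrivial (Fin n) := Fin.nontrivial_iff_two_le.mpr hn
  obtain ⟨j, hj⟩ := exists_ne i
  have hreach := hv.2.preconnected i j
  obtain ⟨w⟩ := hreach
  cases w with
  | nil => exact hj rfl
  | cons hadj _ =>
    rename_i x _
    have : g.Adj (fv n v i) (fv n v x) := hadj
    rw [hi] at this
    exact hu.1 _ this

theorem isolProb_ge_connProb (p : ℝ) (hp0 : 0 ≤ p) (hp1 : p ≤ 1) (n : ℕ) (hn : 1 ≤ n) :
    isolProb (n + 1) p ≥ n * (1 - p) ^ n * connProb n p := by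
  classical
  set S : Finset (Fin (n + 1)) := univ.erase (Fin.last n) with hS
  have hScard : S.card = n := by
    rw [hS, Finset.card_erase_of_mem (mem_univ _), Finset.card_univ, Fintype.card_fin]
    rfl
  have hgp : ∀ g : SimpleGraph (Fin (n + 1)), 0 ≤ graphProb p g := by
    intro g
    exact mul_nonneg (pow_nonneg hp0 _) (pow_nonneg (by linarith) _)
  -- pointwise bound
  have hpt : ∀ g : SimpleGraph (Fin (n + 1)),
      (∑ v ∈ S, if Avg n v g then graphProb p g else 0)
        ≤ (if (∃ v, ∀ w, ¬ g.Adj v w) then graphProb p g else 0) := by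
    intro g
    have hsum : (∑ v ∈ S, if Avg n v g then graphProb p g else 0)
        = (S.filter (fun v => Avg n v g)).card * graphProb p g := by
      rw [← Finset.sum_filter, Finset.sum_const, nsmul_eq_mul]
    rw [hsum]
    rcases Finset.eq_empty_or_nonempty (S.filter (fun v => Avg n v g)) with he | hne
    · rw [he]
      simp only [Finset.card_empty, Nat.cast_zero, zero_mul]
      split
      · exact hgp g
      · exact le_refl 0
    · obtain ⟨v, hvmem⟩ := hne
      rw [Finset.mem_filter] at hvmem
      have hiso : ∃ v, ∀ w, ¬ g.Adj v w := ⟨v, hvmem.2.1⟩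
      rw [if_pos hiso]
      have hcard1 : (S.filter (fun v => Avg n v g)).card ≤ 1 := by
        rcases Nat.lt_or_ge n 2 with h2 | h2
        · -- n = 1 : S has one element
          have : S.card = 1 := by omega
          calc (S.filter (fun v => Avg n v g)).card ≤ S.card := Finset.card_filter_le _ _
            _ = 1 := this
        · apply Finset.card_le_one.mpr
          intro a ha b hb
          rw [Finset.mem_filter] at ha hb
          exact Avg_disjoint h2 g a b ha.2 hb.2
      calc ((S.filter (fun v => Avg n v g)).card : ℝ) * graphProb p g
          ≤ 1 * graphProb p g := by
            apply mul_le_mul_of_nonneg_right _ (hgp g)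
            exact_mod_cast hcard1
        _ = graphProb p g := one_mul _
  have hmain : isolProb (n + 1) p ≥ ∑ v ∈ S, (1 - p) ^ n * connProb n p := by
    have : ∑ v ∈ S, (1 - p) ^ n * connProb n p
        = ∑ v ∈ S, ∑ g : SimpleGraph (Fin (n + 1)), (if Avg n v g then graphProb p g else 0) := by
      apply Finset.sum_congr rfl
      intro v _
      rw [sum_Avg]
    rw [ge_iff_le, this, Finset.sum_comm]
    unfold isolProb probEvent
    refine Finset.sum_le_sum fun g _ => le_trans (hpt g) (le_of_eq ?_)
    congr
  calc isolProb (n + 1) p ≥ ∑ v ∈ S, (1 - p) ^ n * connProb n p := hmain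
    _ = n * (1 - p) ^ n * connProb n p := by
        rw [Finset.sum_const, hScard, nsmul_eq_mul]
        ring
end
end
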